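/- arXiv:2104.02002 — 7 statements merged into one kernel-verified Lean document; each statement's English description precedes it below -/
import Mathlib

section
/- For every real number c > 2 there exists n₀ ∈ ℕ such that for all integers n ≥ n₀ the following holds with N = n + ⌊c·n/log₂ n⌋: for every partition of the Boolean lattice Q_N into families B and R, either B contains an induced copy of Q_2 or R contains an induced copy of Q_n. Equivalently, the induced poset Ramsey number satisfies R(Q_2, Q_n) ≤ n + c·n/log₂ n for all sufficiently large n. -/
/-- A family `F` of subsets of `[N]` (modeled as `Finset (Fin N)`) contains an induced
copy of the Boolean lattice `Q_m`: there is an injection `φ` from `Q_m` into `F` such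
that `φ A ⊆ φ B` if and only if `A ⊆ B`. -/
def ContainsInducedCopy (m N : ℕ) (F : Set (Finset (Fin N))) : Prop :=
  ∃ φ : Finset (Fin m) → Finset (Fin N),
    Function.Injective φ ∧ (∀ A, φ A ∈ F) ∧
    ∀ A B : Finset (Fin m), A ⊆ B ↔ φ A ⊆ φ B

namespace IndRamseyAux

open Finset

lemma q2_of_diamond {N : ℕ} {F : Set (Finset (Fin N))} {a v w d : Finset (Fin N)}
    (ha : a ∈ F) (hv : v ∈ F) (hw : w ∈ F) (hd : d ∈ F)
    (hav : a ⊆ v) (haw : a ⊆ w) (hvd : v ⊆ d) (hwd : w ⊆ d)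
    (hvw : ¬ v ⊆ w) (hwv : ¬ w ⊆ v) : ContainsInducedCopy 2 N F := by
  have had : a ⊆ d := hav.trans hvd
  have hdv : ¬ d ⊆ v := fun h => hwv (hwd.trans h)
  have hdw : ¬ d ⊆ w := fun h => hvw (hvd.trans h)
  have hva : ¬ v ⊆ a := fun h => hvw (h.trans haw)
  have hwa : ¬ w ⊆ a := fun h => hwv (h.trans hav)
  have hda : ¬ d ⊆ a := fun h => hdv (h.trans hav)
  have hiff : ∀ A B : Finset (Fin 2), A ⊆ B ↔
      (if 0 ∈ A then (if 1 ∈ A then d else v) else (if 1 ∈ A then w else a)) ⊆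
      (if 0 ∈ B then (if 1 ∈ B then d else v) else (if 1 ∈ B then w else a)) := by
    intro A B
    have hs : A ⊆ B ↔ ((0 ∈ A → 0 ∈ B) ∧ (1 ∈ A → 1 ∈ B)) := by
      constructor
      · intro h; exact ⟨fun h0 => h h0, fun h1 => h h1⟩
      · rintro ⟨p, q⟩ x hx
        fin_cases x
        · exact p hx
        · exact q hx
    rw [hs]
    by_cases h0A : (0 : Fin 2) ∈ A <;> by_cases h1A : (1 : Fin 2) ∈ A <;>
      by_cases h0B : (0 : Fin 2) ∈ B <;> by_cases h1B : (1 : Fin 2) ∈ B <;>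
      simp [h0A, h1A, h0B, h1B, hav, haw, hvd, hwd, had, hvw, hwv, hdv, hdw, hva, hwa, hda,
        Finset.Subset.refl]
  refine ⟨fun T => if 0 ∈ T then (if 1 ∈ T then d else v) else (if 1 ∈ T then w else a),
    ?_, ?_, hiff⟩
  · intro A B h
    exact Finset.Subset.antisymm_iff.mpr
      ⟨(hiff A B).mpr (le_of_eq h), (hiff B A).mpr (le_of_eq h.symm)⟩
  · intro A
    by_cases h0 : (0 : Fin 2) ∈ A <;> by_cases h1 : (1 : Fin 2) ∈ A <;>
      simp [h0, h1, ha, hv, hw, hd]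

def upSet (n α : ℕ) (σ : Equiv.Perm (Fin α)) (T : Finset (Fin n)) (i : ℕ) :
    Finset (Fin (n + α)) :=
  T.map (Fin.castAddEmb α) ∪
    (Finset.univ.filter (fun j : Fin α => ((σ.symm j : ℕ) < i))).map (Fin.natAddEmb n)

def Lad (n α : ℕ) (σ : Equiv.Perm (Fin α)) (Bl : Set (Finset (Fin (n + α)))) :
    ℕ → Finset (Fin n) → Prop
  | 0, S => ∃ T, T ⊆ S ∧ upSet n α σ T 0 ∈ Bl
  | (i+1), S => ∃ T, T ⊆ S ∧ upSet n α σ T (i+1) ∈ Bl ∧ Lad n α σ Bl i T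

variable {n α : ℕ} {σ σ' : Equiv.Perm (Fin α)} {Bl : Set (Finset (Fin (n + α)))}

lemma upSet_mono {T T' : Finset (Fin n)} {i i' : ℕ} (hT : T ⊆ T') (hi : i ≤ i') :
    upSet n α σ T i ⊆ upSet n α σ T' i' :=
  Finset.union_subset_union (Finset.map_subset_map.mpr hT)
    (Finset.map_subset_map.mpr (by
      intro j hj
      rw [Finset.mem_filter] at hj ⊢
      exact ⟨hj.1, lt_of_lt_of_le hj.2 hi⟩))

lemma cast_mem_upSet_iff {T : Finset (Fin n)} {i : ℕ} {x : Fin n} :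
    (Fin.castAddEmb α) x ∈ upSet n α σ T i ↔ x ∈ T := by
  simp only [upSet, Finset.mem_union, Finset.mem_map, Finset.mem_filter]
  constructor
  · rintro (h | ⟨j, hj, hjx⟩)
    · rcases h with ⟨y, hy, hxy⟩
      rwa [← (Fin.castAddEmb α).injective hxy]
    · exfalso
      have h1 : ((Fin.natAddEmb n j : Fin (n + α)) : ℕ) = n + (j : ℕ) := rfl
      have h2 : ((Fin.castAddEmb α x : Fin (n + α)) : ℕ) = (x : ℕ) := rfl
      rw [hjx] at h1
      omega
  · intro h; exact Or.inl ⟨x, h, rfl⟩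

lemma natAdd_mem_upSet_iff {T : Finset (Fin n)} {i : ℕ} {j : Fin α} :
    (Fin.natAddEmb n) j ∈ upSet n α σ T i ↔ ((σ.symm j : ℕ) < i) := by
  simp only [upSet, Finset.mem_union, Finset.mem_map, Finset.mem_filter]
  constructor
  · rintro (⟨y, hy, hxy⟩ | ⟨j', ⟨_, hj'⟩, hjx⟩)
    · exfalso
      have h1 : ((Fin.natAddEmb n j : Fin (n + α)) : ℕ) = n + (j : ℕ) := rfl
      have h2 : ((Fin.castAddEmb α y : Fin (n + α)) : ℕ) = (y : ℕ) := rfl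
      rw [hxy] at h2
      omega
    · rwa [← (Fin.natAddEmb n).injective hjx]
  · intro h; exact Or.inr ⟨j, ⟨Finset.mem_univ j, h⟩, rfl⟩

lemma Lad_mono : ∀ {i : ℕ} {S S' : Finset (Fin n)}, Lad n α σ Bl i S → S ⊆ S' →
    Lad n α σ Bl i S'
  | 0, S, S', ⟨T, hT, hmem⟩, hSS' => ⟨T, hT.trans hSS', hmem⟩
  | (i+1), S, S', ⟨T, hT, hmem, hlad⟩, hSS' => ⟨T, hT.trans hSS', hmem, hlad⟩

lemma Lad_ladder : ∀ {i : ℕ} {S : Finset (Fin n)}, Lad n α σ Bl i S →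
    ∃ u : ℕ → Finset (Fin n), Monotone u ∧ (∀ j ≤ i, upSet n α σ (u j) j ∈ Bl) ∧ u i ⊆ S := by
  intro i
  induction i with
  | zero =>
    rintro S ⟨T, hT, hmem⟩
    exact ⟨fun _ => T, monotone_const, fun j hj => by
      interval_cases j; exact hmem, hT⟩
  | succ i ih =>
    rintro S ⟨T, hT, hmem, hlad⟩
    obtain ⟨u, humono, humem, huT⟩ := ih hlad
    refine ⟨fun j => if j ≤ i then u j else T, ?_, ?_, ?_⟩
    · intro x y hxy
      by_cases hx : x ≤ i <;> by_cases hy : y ≤ i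
      · simpa [hx, hy] using humono hxy
      · simpa [hx, hy] using (humono (show x ≤ i from hx)).trans huT
      · omega
      · simp [hx, hy]
    · intro j hj
      by_cases hji : j ≤ i
      · simpa [hji] using humem j hji
      · have : j = i + 1 := by omega
        subst this
        simpa [hji] using hmem
    · simpa using hT

lemma upSet_zero (T : Finset (Fin n)) : upSet n α σ T 0 = T.map (Fin.castAddEmb α) := by
  simp [upSet]

lemma upSet_top {i : ℕ} (hi : α ≤ i) (T : Finset (Fin n)) :
    upSet n α σ T i = T.map (Fin.castAddEmb α) ∪ Finset.univ.map (Fin.natAddEmb n) := by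
  have : Finset.univ.filter (fun j : Fin α => ((σ.symm j : ℕ) < i)) = Finset.univ := by
    apply Finset.filter_true_of_mem
    intro j _
    exact lt_of_lt_of_le (Fin.is_lt _) hi
  rw [upSet, this]

lemma embed_of_good (hgood : ¬ Lad n α σ Bl α Finset.univ)
    {R : Set (Finset (Fin (n + α)))} (hunion : Bl ∪ R = Set.univ) :
    ContainsInducedCopy n (n + α) R := by
  have hex : ∀ S : Finset (Fin n), ¬ Lad n α σ Bl α S :=
    fun S h => hgood (Lad_mono h (Finset.subset_univ S))
  set r : Finset (Fin n) → ℕ := fun S => sInf {i | ¬ Lad n α σ Bl i S} with hrdef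
  have hrspec : ∀ S, ¬ Lad n α σ Bl (r S) S := fun S => Nat.sInf_mem (⟨α, hex S⟩ : Set.Nonempty {i | ¬ Lad n α σ Bl i S})
  have hrmin : ∀ S j, j < r S → Lad n α σ Bl j S := by
    intro S j hj
    by_contra h
    have h2 : r S ≤ j := Nat.sInf_le (show j ∈ {i | ¬ Lad n α σ Bl i S} from h)
    omega
  have hrmono : ∀ {A B : Finset (Fin n)}, A ⊆ B → r A ≤ r B := by
    intro A B hAB
    exact Nat.sInf_le (fun h => hrspec B (Lad_mono h hAB))
  have hred : ∀ S, upSet n α σ S (r S) ∉ Bl := by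
    intro S hmem
    cases hrs : r S with
    | zero =>
      exact hrspec S (by rw [hrs]; exact ⟨S, Finset.Subset.refl S, by rwa [← hrs]⟩)
    | succ j =>
      refine hrspec S ?_
      rw [hrs]
      exact ⟨S, Finset.Subset.refl S, by rwa [← hrs], hrmin S j (by omega)⟩
  have hiff : ∀ A B : Finset (Fin n), A ⊆ B ↔
      upSet n α σ A (r A) ⊆ upSet n α σ B (r B) := by
    intro A B
    constructor
    · intro h
      exact upSet_mono h (hrmono h)
    · intro h x hx
      have hxA : (Fin.castAddEmb α) x ∈ upSet n α σ A (r A) := cast_mem_upSet_iff.mpr hx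
      exact cast_mem_upSet_iff.mp (h hxA)
  refine ⟨fun S => upSet n α σ S (r S), ?_, ?_, hiff⟩
  · intro A B h
    exact Finset.Subset.antisymm ((hiff A B).mpr (le_of_eq h)) ((hiff B A).mpr (le_of_eq h.symm))
  · intro S
    have : upSet n α σ S (r S) ∈ Bl ∪ R := by rw [hunion]; trivial
    rcases this with h | h
    · exact absurd h (hred S)
    · exact h

section
variable {n α : ℕ} {σ σ' : Equiv.Perm (Fin α)}

lemma filter_eq_image (σ : Equiv.Perm (Fin α)) (i : ℕ) :
    Finset.univ.filter (fun j : Fin α => ((σ.symm j : ℕ) < i)) =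
    Finset.image σ (Finset.univ.filter (fun j : Fin α => ((j : ℕ) < i))) := by
  ext j
  rw [Finset.mem_image, Finset.mem_filter]
  constructor
  · intro h
    exact ⟨σ.symm j, Finset.mem_filter.mpr ⟨mem_univ _, h.2⟩, σ.apply_symm_apply j⟩
  · rintro ⟨j', hj', rfl⟩
    refine ⟨mem_univ _, ?_⟩
    have h2 := (Finset.mem_filter.mp hj').2
    simpa using h2

lemma card_filter_symm_lt (σ : Equiv.Perm (Fin α)) (i : ℕ) :
    (Finset.univ.filter (fun j : Fin α => ((σ.symm j : ℕ) < i))).card =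
    (Finset.univ.filter (fun j : Fin α => ((j : ℕ) < i))).card := by
  rw [filter_eq_image]
  exact Finset.card_image_of_injective _ (Equiv.injective σ)

lemma perm_eq_of_filters_eq (h : ∀ i ≤ α,
    Finset.univ.filter (fun j : Fin α => ((σ.symm j : ℕ) < i)) =
    Finset.univ.filter (fun j : Fin α => ((σ'.symm j : ℕ) < i))) : σ = σ' := by
  have hsymm : ∀ e : Fin α, σ.symm e = σ'.symm e := by
    intro e
    have key : ∀ (τ τ' : Equiv.Perm (Fin α)),
        (∀ i ≤ α, Finset.univ.filter (fun j : Fin α => ((τ.symm j : ℕ) < i)) =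
          Finset.univ.filter (fun j : Fin α => ((τ'.symm j : ℕ) < i))) →
        ((τ'.symm e : ℕ) ≤ (τ.symm e : ℕ)) := by
      intro τ τ' hττ'
      have hle : ((τ.symm e : ℕ) + 1) ≤ α := (τ.symm e).is_lt
      have := hττ' ((τ.symm e : ℕ) + 1) hle
      have hmem : e ∈ Finset.univ.filter (fun j : Fin α => ((τ.symm j : ℕ) < (τ.symm e : ℕ) + 1)) := by
        simp
      rw [this] at hmem
      simp only [mem_filter, mem_univ, true_and] at hmem
      omega
    have h1 := key σ σ' h
    have h2 := key σ' σ (fun i hi => (h i hi).symm)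
    exact Fin.ext (le_antisymm h2 h1)
  have hss : σ.symm = σ'.symm := Equiv.ext hsymm
  calc σ = σ.symm.symm := (Equiv.symm_symm σ).symm
    _ = σ'.symm.symm := by rw [hss]
    _ = σ' := Equiv.symm_symm σ'

end

section
variable {n α : ℕ} {Bl : Set (Finset (Fin (n + α)))}

lemma exists_good (hcard : 4 ^ n < Nat.factorial α)
    (hB : ¬ ContainsInducedCopy 2 (n + α) Bl) :
    ∃ σ : Equiv.Perm (Fin α), ¬ Lad n α σ Bl α Finset.univ := by
  by_contra hcon
  push_neg at hcon
  have hlad : ∀ σ : Equiv.Perm (Fin α), ∃ u : ℕ → Finset (Fin n),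
      Monotone u ∧ (∀ j ≤ α, upSet n α σ (u j) j ∈ Bl) := by
    intro σ
    obtain ⟨u, h1, h2, _⟩ := Lad_ladder (hcon σ)
    exact ⟨u, h1, h2⟩
  choose u humono humem using hlad
  have hinj : Function.Injective (fun σ : Equiv.Perm (Fin α) => (u σ 0, u σ α)) := by
    intro σ σ' h
    rw [Prod.mk.injEq] at h
    obtain ⟨h0, hα⟩ := h
    refine perm_eq_of_filters_eq (fun i hi => ?_)
    have ha : upSet n α σ (u σ 0) 0 ∈ Bl := humem σ 0 (Nat.zero_le _)
    have haeq : upSet n α σ (u σ 0) 0 = upSet n α σ' (u σ' 0) 0 := by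
      rw [upSet_zero, upSet_zero, h0]
    have hd : upSet n α σ (u σ α) α ∈ Bl := humem σ α le_rfl
    have hdeq : upSet n α σ (u σ α) α = upSet n α σ' (u σ' α) α := by
      rw [upSet_top le_rfl, upSet_top le_rfl, hα]
    have hv : upSet n α σ (u σ i) i ∈ Bl := humem σ i hi
    have hw : upSet n α σ' (u σ' i) i ∈ Bl := humem σ' i hi
    have hav : upSet n α σ (u σ 0) 0 ⊆ upSet n α σ (u σ i) i :=
      upSet_mono (humono σ (Nat.zero_le i)) (Nat.zero_le i)
    have haw : upSet n α σ (u σ 0) 0 ⊆ upSet n α σ' (u σ' i) i := by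
      rw [haeq]
      exact upSet_mono (humono σ' (Nat.zero_le i)) (Nat.zero_le i)
    have hvd : upSet n α σ (u σ i) i ⊆ upSet n α σ (u σ α) α :=
      upSet_mono (humono σ hi) hi
    have hwd : upSet n α σ' (u σ' i) i ⊆ upSet n α σ (u σ α) α := by
      rw [hdeq]
      exact upSet_mono (humono σ' hi) hi
    have hcomp : upSet n α σ (u σ i) i ⊆ upSet n α σ' (u σ' i) i ∨
        upSet n α σ' (u σ' i) i ⊆ upSet n α σ (u σ i) i := by
      by_contra hc
      push_neg at hc
      exact hB (q2_of_diamond ha hv hw hd hav haw hvd hwd hc.1 hc.2)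
    have hcards : (Finset.univ.filter (fun j : Fin α => ((σ.symm j : ℕ) < i))).card =
        (Finset.univ.filter (fun j : Fin α => ((σ'.symm j : ℕ) < i))).card := by
      rw [card_filter_symm_lt, card_filter_symm_lt]
    rcases hcomp with hsub | hsub
    · refine Finset.eq_of_subset_of_card_le ?_ (le_of_eq hcards.symm)
      intro j hj
      have hmem : (Fin.natAddEmb n) j ∈ upSet n α σ (u σ i) i :=
        natAdd_mem_upSet_iff.mpr (Finset.mem_filter.mp hj).2
      have := natAdd_mem_upSet_iff.mp (hsub hmem)
      exact Finset.mem_filter.mpr ⟨mem_univ _, this⟩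
    · refine (Finset.eq_of_subset_of_card_le ?_ (le_of_eq hcards)).symm
      intro j hj
      have hmem : (Fin.natAddEmb n) j ∈ upSet n α σ' (u σ' i) i :=
        natAdd_mem_upSet_iff.mpr (Finset.mem_filter.mp hj).2
      have := natAdd_mem_upSet_iff.mp (hsub hmem)
      exact Finset.mem_filter.mpr ⟨mem_univ _, this⟩
  have hle := Fintype.card_le_of_injective _ hinj
  rw [Fintype.card_perm, Fintype.card_prod, Fintype.card_finset, Fintype.card_fin,
    Fintype.card_fin] at hle
  have h4 : (4 : ℕ) ^ n = 2 ^ n * 2 ^ n := by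
    rw [← mul_pow]; norm_num
  omega

lemma embed_red (hcard : 4 ^ n < Nat.factorial α)
    (hB : ¬ ContainsInducedCopy 2 (n + α) Bl)
    {R : Set (Finset (Fin (n + α)))} (hunion : Bl ∪ R = Set.univ) :
    ContainsInducedCopy n (n + α) R := by
  obtain ⟨σ, hgood⟩ := exists_good hcard hB
  exact embed_of_good hgood hunion

end


lemma pow_sub_le_factorial' {m a : ℕ} (h : m ≤ a) : m ^ (a - m) ≤ Nat.factorial a := by
  induction a with
  | zero => simp [Nat.le_zero.mp h]
  | succ a ih =>
    rcases Nat.lt_or_ge m (a + 1) with hm | hm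
    · have hma : m ≤ a := by omega
      have he : a + 1 - m = (a - m) + 1 := by omega
      rw [he, pow_succ]
      calc m ^ (a - m) * m ≤ Nat.factorial a * (a + 1) :=
            Nat.mul_le_mul (ih hma) (by omega)
        _ = Nat.factorial (a + 1) := by rw [Nat.factorial_succ, Nat.mul_comm]
    · have : m = a + 1 := le_antisymm h hm
      subst this
      simp; exact Nat.factorial_pos (a + 1)

set_option maxHeartbeats 2000000 in
lemma analytic_lemma (c : ℝ) (hc : 2 < c) :
    ∃ n₀ : ℕ, ∀ n : ℕ, n₀ ≤ n → 4 ^ n < Nat.factorial ⌊c * n / Real.logb 2 n⌋₊ := by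
  have hlog2pos : 0 < Real.log 2 := Real.log_pos one_lt_two
  set δ : ℝ := min (c - 2) 1 with hδdef
  have hδpos : 0 < δ := lt_min (by linarith) one_pos
  have hδ1 : δ ≤ 1 := min_le_right _ _
  have hδc : 2 + δ ≤ c := by
    have h := min_le_left (c - 2) 1
    rw [hδdef]; linarith
  set r : ℝ := 1 + δ / 32 with hrdef
  set r' : ℝ := 1 + δ / 16 with hr'def
  have hr1 : 1 < r := by rw [hrdef]; linarith
  have hr'1 : 1 < r' := by rw [hr'def]; linarith
  have hs : 0 < 1 - 1 / r := by
    have : 1 / r < 1 := by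
      rw [div_lt_one (by linarith)]; linarith
    linarith
  have hε : (0 : ℝ) < δ / 4 * Real.log 2 := by positivity
  have hLtend : Filter.Tendsto (fun n : ℕ => Real.logb 2 (n : ℝ)) Filter.atTop Filter.atTop :=
    (Real.tendsto_logb_atTop one_lt_two).comp tendsto_natCast_atTop_atTop
  have E1 : ∀ᶠ n : ℕ in Filter.atTop, 64 / δ ≤ Real.logb 2 (n : ℝ) :=
    hLtend.eventually_ge_atTop _
  have E2 : ∀ᶠ n : ℕ in Filter.atTop, 1 ≤ Real.logb 2 (n : ℝ) :=
    hLtend.eventually_ge_atTop _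
  have E3 : ∀ᶠ n : ℕ in Filter.atTop,
      ‖Real.log (n : ℝ)‖ ≤ δ / 4 * Real.log 2 * ‖id (n : ℝ)‖ :=
    tendsto_natCast_atTop_atTop.eventually
      ((Asymptotics.isLittleO_iff.mp Real.isLittleO_log_id_atTop) hε)
  have E4 : ∀ᶠ n : ℕ in Filter.atTop,
      ‖Real.log (n : ℝ)‖ ≤ δ / 4 * Real.log 2 * ‖(n : ℝ) ^ (1 - 1 / r)‖ :=
    tendsto_natCast_atTop_atTop.eventually
      ((Asymptotics.isLittleO_iff.mp (isLittleO_log_rpow_atTop hs)) hε)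
  have E5 : ∀ᶠ n : ℕ in Filter.atTop, 8 / δ ≤ (n : ℝ) :=
    tendsto_natCast_atTop_atTop.eventually_ge_atTop _
  have E0 : ∀ᶠ n : ℕ in Filter.atTop, 2 ≤ n := Filter.eventually_ge_atTop 2
  have big := E0.and (E1.and (E2.and (E3.and (E4.and E5))))
  rw [Filter.eventually_atTop] at big
  obtain ⟨n₀, hn₀⟩ := big
  refine ⟨n₀, fun n hn => ?_⟩
  obtain ⟨hn2, hL64, hL1, hlog1, hlog2, hn8⟩ := hn₀ n hn
  set x : ℝ := (n : ℝ) with hxdef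
  have hx2 : (2 : ℝ) ≤ x := by rw [hxdef]; exact_mod_cast hn2
  have hx0 : (0 : ℝ) < x := by linarith
  set L : ℝ := Real.logb 2 x with hLdef
  have hLpos : 0 < L := by linarith
  set α : ℕ := ⌊c * x / L⌋₊ with hαdef
  set k : ℕ := ⌊L / r⌋₊ with hkdef
  set m : ℕ := 2 ^ k with hmdef
  have hklr : (k : ℝ) ≤ L / r := Nat.floor_le (by positivity)
  have hkge : L / r - 1 < (k : ℝ) := Nat.sub_one_lt_floor _
  have hαge : c * x / L - 1 < (α : ℝ) := Nat.sub_one_lt_floor _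
  -- m ≤ x ^ (1/r)
  have h2L : (2 : ℝ) ^ L = x := Real.rpow_logb (by norm_num) (by norm_num) hx0
  have hm_le : (m : ℝ) ≤ x ^ (1 / r) := by
    have h1 : (m : ℝ) = (2 : ℝ) ^ (k : ℝ) := by
      rw [Real.rpow_natCast]
      exact_mod_cast rfl
    have h2' : (2 : ℝ) ^ ((k : ℝ)) ≤ (2 : ℝ) ^ (L / r) :=
      Real.rpow_le_rpow_of_exponent_le (by norm_num) hklr
    have h3 : (2 : ℝ) ^ (L / r) = x ^ (1 / r) := by
      rw [← h2L, ← Real.rpow_mul (by norm_num : (0 : ℝ) ≤ 2)]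
      congr 1
      ring
    rw [h1]; rw [h3] at h2'; exact h2'
  -- log bounds
  have hlogx_nonneg : 0 ≤ Real.log x := Real.log_nonneg (by linarith)
  have hLx : L ≤ δ / 4 * x := by
    rw [Real.norm_eq_abs, Real.norm_eq_abs, abs_of_nonneg hlogx_nonneg,
      abs_of_nonneg (by positivity : (0:ℝ) ≤ id x)] at hlog1
    simp only [id] at hlog1
    rw [hLdef, Real.logb, div_le_iff₀ hlog2pos]
    nlinarith
  have hLxr : L * x ^ (1 / r) ≤ δ / 4 * x := by
    have hrp : (0 : ℝ) ≤ x ^ (1 - 1 / r) := Real.rpow_nonneg (le_of_lt hx0) _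
    rw [Real.norm_eq_abs, Real.norm_eq_abs, abs_of_nonneg hlogx_nonneg,
      abs_of_nonneg hrp] at hlog2
    have hL2 : L ≤ δ / 4 * x ^ (1 - 1 / r) := by
      rw [hLdef, Real.logb, div_le_iff₀ hlog2pos]
      nlinarith
    have hmul := mul_le_mul_of_nonneg_right hL2
      (Real.rpow_nonneg (le_of_lt hx0) (1 / r))
    have hxx : x ^ (1 - 1 / r) * x ^ (1 / r) = x := by
      rw [← Real.rpow_add hx0]
      norm_num
    calc L * x ^ (1 / r) ≤ δ / 4 * x ^ (1 - 1 / r) * x ^ (1 / r) := hmul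
      _ = δ / 4 * (x ^ (1 - 1 / r) * x ^ (1 / r)) := by ring
      _ = δ / 4 * x := by rw [hxx]
  have hc'' : δ / 2 ≤ c - (2 + δ / 2) := by linarith
  have honeP : 1 ≤ δ / 4 * (x / L) := by
    have he : δ / 4 * (x / L) = δ / 4 * x / L := by ring
    rw [he, le_div_iff₀ hLpos, one_mul]; exact hLx
  have hpowP : x ^ (1 / r) ≤ δ / 4 * (x / L) := by
    have he : δ / 4 * (x / L) = δ / 4 * x / L := by ring
    rw [he, le_div_iff₀ hLpos]
    calc x ^ (1 / r) * L = L * x ^ (1 / r) := by ring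
      _ ≤ δ / 4 * x := hLxr
  have hPpos : 0 < x / L := by positivity
  have hαm2 : (m : ℝ) + (2 + δ / 2) * (x / L) ≤ (α : ℝ) := by
    have h1 : δ / 2 * (x / L) ≤ (c - (2 + δ / 2)) * (x / L) :=
      mul_le_mul_of_nonneg_right hc'' (le_of_lt hPpos)
    have h2 : δ / 2 * (x / L) = δ / 4 * (x / L) + δ / 4 * (x / L) := by ring
    have hkey : (m : ℝ) + 1 ≤ (c - (2 + δ / 2)) * (x / L) := by linarith [hm_le]
    have hceq : c * x / L = (2 + δ / 2) * (x / L) + (c - (2 + δ / 2)) * (x / L) := by ring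
    linarith [hαge]
  have hmα : m ≤ α := by
    have h1 : (0:ℝ) < (2 + δ / 2) * (x / L) := by positivity
    have : (m : ℝ) ≤ (α : ℝ) := by linarith
    exact_mod_cast this
  have hαmR : (2 + δ / 2) * (x / L) ≤ (α : ℝ) - (m : ℝ) := by linarith
  have hkr' : L / r' ≤ (k : ℝ) := by
    have hrpos : (0:ℝ) < r := by linarith
    have hr'pos : (0:ℝ) < r' := by linarith
    have hrr0 : (0:ℝ) < r * r' := by positivity
    have hinv : 1 / r - 1 / r' = (δ / 32) / (r * r') := by
      field_simp
      ring
    have hrr2 : r * r' ≤ 2 := by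
      rw [hrdef, hr'def]
      nlinarith [mul_le_mul_of_nonneg_left hδ1 hδpos.le]
    have hge : δ / 64 ≤ 1 / r - 1 / r' := by
      rw [hinv]
      calc δ / 64 = (δ / 32) / 2 := by ring
        _ ≤ (δ / 32) / (r * r') := by
            apply div_le_div_of_nonneg_left (by positivity) hrr0 hrr2
    have hL2 : 1 ≤ L * (1 / r - 1 / r') := by
      calc (1:ℝ) = (64 / δ) * (δ / 64) := by field_simp
        _ ≤ L * (δ / 64) := mul_le_mul_of_nonneg_right hL64 (by positivity)
        _ ≤ L * (1 / r - 1 / r') := mul_le_mul_of_nonneg_left hge (le_of_lt hLpos)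
    have he1 : L / r = L * (1 / r) := by ring
    have he2 : L / r' = L * (1 / r') := by ring
    nlinarith [hkge]
  have hprod : 2 * x + 1 ≤ (k : ℝ) * ((α : ℝ) - m) := by
    have hr'pos : (0:ℝ) < r' := by linarith
    have h1 : (L / r') * ((2 + δ / 2) * (x / L)) ≤ (k : ℝ) * ((α : ℝ) - m) :=
      mul_le_mul hkr' hαmR (by positivity) (le_trans (by positivity) hkr')
    have h2 : (L / r') * ((2 + δ / 2) * (x / L)) = (2 + δ / 2) * x / r' := by
      field_simp
    have hfac : (2 + δ / 4) * r' ≤ 2 + δ / 2 := by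
      rw [hr'def]; nlinarith
    have h3 : (2 + δ / 4) * x ≤ (2 + δ / 2) * x / r' := by
      rw [le_div_iff₀ hr'pos]
      nlinarith [mul_le_mul_of_nonneg_right hfac (le_of_lt hx0)]
    have hδ8 : δ * (8 / δ) = 8 := by field_simp
    have h4 : 2 * x + 1 ≤ (2 + δ / 4) * x := by
      nlinarith [mul_le_mul_of_nonneg_left hn8 (le_of_lt hδpos)]
    linarith
  have hfin : 2 * n + 1 ≤ k * (α - m) := by
    have hcast : ((k * (α - m) : ℕ) : ℝ) = (k : ℝ) * ((α : ℝ) - (m : ℝ)) := by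
      push_cast [Nat.cast_sub hmα]
      ring
    have hx' : ((2 * n + 1 : ℕ) : ℝ) ≤ ((k * (α - m) : ℕ) : ℝ) := by
      rw [hcast]
      push_cast
      linarith [hprod]
    exact_mod_cast hx'
  calc (4:ℕ) ^ n = 2 ^ (2 * n) := by rw [pow_mul]; norm_num
    _ < 2 ^ (2 * n + 1) := Nat.pow_lt_pow_right one_lt_two (by omega)
    _ ≤ 2 ^ (k * (α - m)) := Nat.pow_le_pow_right (by norm_num) hfin
    _ = m ^ (α - m) := by rw [hmdef, ← pow_mul]
    _ ≤ Nat.factorial α := pow_sub_le_factorial' hmα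

end IndRamseyAux

/-- For every real `c > 2` there is `n₀` such that for all `n ≥ n₀`, with
`N = n + ⌊c·n/log₂ n⌋`, every partition of `Q_N` into families `B` and `R` yields a
blue induced copy of `Q_2` or a red induced copy of `Q_n`; i.e.
`R(Q_2, Q_n) ≤ n + c·n/log₂ n` for sufficiently large `n`. -/
theorem induced_ramsey_Q2_Qn_upper_asymptotic :
    ∀ c : ℝ, 2 < c → ∃ n₀ : ℕ, ∀ n : ℕ, n₀ ≤ n →
      ∀ B R : Set (Finset (Fin (n + ⌊c * n / Real.logb 2 n⌋₊))),
        B ∪ R = Set.univ → B ∩ R = ∅ →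
        ContainsInducedCopy 2 (n + ⌊c * n / Real.logb 2 n⌋₊) B ∨
        ContainsInducedCopy n (n + ⌊c * n / Real.logb 2 n⌋₊) R := by
  intro c hc
  obtain ⟨n₀, hn₀⟩ := IndRamseyAux.analytic_lemma c hc
  refine ⟨n₀, fun n hn B R hunion _ => ?_⟩
  by_cases hB : ContainsInducedCopy 2 (n + ⌊c * n / Real.logb 2 n⌋₊) B
  · exact Or.inl hB
  · exact Or.inr (IndRamseyAux.embed_red (hn₀ n hn) hB hunion)
end

section
/- For every integer n ≥ 2 the following holds with N = n + ⌊6.14·n/log₂ n⌋: for every partition of the Boolean lattice Q_N into families B and R, either B contains an induced copy of Q_2 or R contains an induced copy of Q_n. Equivalently, R(Q_2, Q_n) ≤ n + 6.14·n/log₂ n for all n ≥ 2. -/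
namespace IndRamseyAux


open Finset

/-! ### Generic helpers -/

lemma inj_of_iff {m N : ℕ} {φ : Finset (Fin m) → Finset (Fin N)}
    (h : ∀ A B : Finset (Fin m), A ⊆ B ↔ φ A ⊆ φ B) : Function.Injective φ := by
  intro A B hAB
  exact subset_antisymm ((h A B).2 (le_of_eq hAB)) ((h B A).2 (le_of_eq hAB.symm))

lemma disjSum_subset_iff {α β : Type*} {s s' : Finset α} {t t' : Finset β} :
    s.disjSum t ⊆ s'.disjSum t' ↔ s ⊆ s' ∧ t ⊆ t' := by
  constructor
  · intro h
    constructor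
    · intro x hx
      exact Finset.inl_mem_disjSum.1 (h (Finset.inl_mem_disjSum.2 hx))
    · intro x hx
      exact Finset.inr_mem_disjSum.1 (h (Finset.inr_mem_disjSum.2 hx))
  · rintro ⟨h1, h2⟩ x hx
    rcases Finset.mem_disjSum.1 hx with ⟨a, ha, rfl⟩ | ⟨b, hb, rfl⟩
    · exact Finset.inl_mem_disjSum.2 (h1 ha)
    · exact Finset.inr_mem_disjSum.2 (h2 hb)

/-- The subset of `Fin (n+k)` built from a subset of the first `n` coordinates and
a subset of the last `k` coordinates. -/
def pr (n k : ℕ) (X : Finset (Fin n)) (T : Finset (Fin k)) : Finset (Fin (n + k)) :=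
  (X.disjSum T).map finSumFinEquiv.toEmbedding

lemma pr_subset_iff {n k : ℕ} {X X' : Finset (Fin n)} {T T' : Finset (Fin k)} :
    pr n k X T ⊆ pr n k X' T' ↔ X ⊆ X' ∧ T ⊆ T' := by
  rw [pr, pr, Finset.map_subset_map]
  exact disjSum_subset_iff

/-! ### Initial segments of an ordering -/

/-- The first `j` elements of `Fin k` in the ordering `σ`. -/
def Tst {k : ℕ} (σ : Equiv.Perm (Fin k)) (j : ℕ) : Finset (Fin k) :=
  Finset.univ.filter (fun t => ((σ.symm t : Fin k) : ℕ) < j)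

lemma mem_Tst {k : ℕ} {σ : Equiv.Perm (Fin k)} {t : Fin k} {j : ℕ} :
    t ∈ Tst σ j ↔ ((σ.symm t : Fin k) : ℕ) < j := by
  simp [Tst]

lemma apply_mem_Tst {k : ℕ} {σ : Equiv.Perm (Fin k)} {i : Fin k} {j : ℕ} :
    σ i ∈ Tst σ j ↔ (i : ℕ) < j := by
  simp [mem_Tst]

lemma Tst_mono {k : ℕ} (σ : Equiv.Perm (Fin k)) {j j' : ℕ} (h : j ≤ j') :
    Tst σ j ⊆ Tst σ j' := by
  intro t ht
  rw [mem_Tst] at ht ⊢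
  omega

lemma Tst_zero {k : ℕ} (σ : Equiv.Perm (Fin k)) : Tst σ 0 = ∅ := by
  ext t; simp [mem_Tst]

lemma Tst_top {k : ℕ} (σ : Equiv.Perm (Fin k)) : Tst σ k = Finset.univ := by
  ext t; simp [mem_Tst, Fin.is_lt]

/-! ### Ladders -/

/-- A full ladder for the ordering `σ`: a weakly increasing chain `Z 0 ⊆ ⋯ ⊆ Z k` of
subsets of the first `n` coordinates such that every `Z j ∪ Tst σ j` is blue. -/
def IsLadder {n k : ℕ} (Blue : Set (Finset (Fin (n + k)))) (σ : Equiv.Perm (Fin k))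
    (Z : ℕ → Finset (Fin n)) : Prop :=
  (∀ j j', j ≤ j' → j' ≤ k → Z j ⊆ Z j') ∧ ∀ j, j ≤ k → pr n k (Z j) (Tst σ j) ∈ Blue

/-! ### The red branch: no full ladder for some ordering gives a red copy of `Q_n` -/

lemma red_embedding {n k : ℕ} (Blue : Set (Finset (Fin (n + k)))) (σ : Equiv.Perm (Fin k))
    (hno : ¬ ∃ Z, IsLadder Blue σ Z) :
    ∃ φ : Finset (Fin n) → Finset (Fin (n + k)),
      (∀ A, φ A ∉ Blue) ∧ ∀ A B : Finset (Fin n), A ⊆ B ↔ φ A ⊆ φ B := by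
  classical
  -- P X r : there is a ladder of length r (indices 0,…,r-1) inside X
  let P : Finset (Fin n) → ℕ → Prop := fun X r =>
    ∃ Z : ℕ → Finset (Fin n), (∀ j j', j ≤ j' → j' < r → Z j ⊆ Z j') ∧
      (∀ j, j < r → Z j ⊆ X ∧ pr n k (Z j) (Tst σ j) ∈ Blue)
  have hP0 : ∀ X, P X 0 := by
    intro X
    exact ⟨fun _ => ∅, by intro j j' _ h; omega, by intro j h; omega⟩
  have hPmono : ∀ {X Y r}, X ⊆ Y → P X r → P Y r := by
    rintro X Y r hXY ⟨Z, h1, h2⟩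
    exact ⟨Z, h1, fun j hj => ⟨(h2 j hj).1.trans hXY, (h2 j hj).2⟩⟩
  let L : Finset (Fin n) → ℕ := fun X => Nat.findGreatest (P X) k
  have hLle : ∀ X, L X ≤ k := fun X => Nat.findGreatest_le k
  have hLspec : ∀ X, P X (L X) := fun X => Nat.findGreatest_spec (Nat.zero_le k) (hP0 X)
  have hLmono : ∀ {X Y}, X ⊆ Y → L X ≤ L Y := by
    intro X Y hXY
    exact Nat.le_findGreatest (hLle X) (hPmono hXY (hLspec X))
  -- key: the candidate set is red
  have hred : ∀ X : Finset (Fin n), pr n k X (Tst σ (L X)) ∉ Blue := by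
    intro X hblue
    obtain ⟨Z, hZ1, hZ2⟩ := hLspec X
    set r := L X with hr
    -- extended ladder
    let Z' : ℕ → Finset (Fin n) := fun j => if j < r then Z j else X
    have hmono' : ∀ j j', j ≤ j' → j' < r + 1 → Z' j ⊆ Z' j' := by
      intro j j' hjj' hj'
      by_cases h1 : j < r <;> by_cases h2 : j' < r <;>
        simp only [Z', if_pos, if_neg, h1, h2, if_true, if_false]
      · exact hZ1 j j' hjj' h2
      · exact (hZ2 j h1).1
      · omega
      · exact subset_rfl
    have hcond' : ∀ j, j < r + 1 → Z' j ⊆ X ∧ pr n k (Z' j) (Tst σ j) ∈ Blue := by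
      intro j hj
      by_cases h1 : j < r
      · simpa only [Z', if_pos h1] using hZ2 j h1
      · have hjr : j = r := by omega
        subst hjr
        simp only [Z', lt_irrefl, if_neg (lt_irrefl r)]
        exact ⟨subset_rfl, hblue⟩
    have hP' : P X (r + 1) := ⟨Z', hmono', hcond'⟩
    rcases lt_or_ge r k with hlt | hge
    · have hge2 : r + 1 ≤ L X := Nat.le_findGreatest (by omega : r + 1 ≤ k) hP'
      omega
    · -- r = k, so we get a full ladder, contradiction
      have hrk : r = k := le_antisymm (hLle X) hge
      refine hno ⟨Z', ?_, ?_⟩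
      · intro j j' hjj' hj'
        exact hmono' j j' hjj' (by omega)
      · intro j hj
        exact (hcond' j (by omega)).2
  refine ⟨fun A => pr n k A (Tst σ (L A)), fun A => hred A, ?_⟩
  intro A B
  constructor
  · intro hAB
    exact pr_subset_iff.2 ⟨hAB, Tst_mono σ (hLmono hAB)⟩
  · intro h
    exact (pr_subset_iff.1 h).1

/-! ### A `Q₂` copy from four sets in diamond position -/

lemma subset_fin2 {A B : Finset (Fin 2)} :
    A ⊆ B ↔ ((0 ∈ A → 0 ∈ B) ∧ (1 ∈ A → 1 ∈ B)) := by
  constructor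
  · exact fun h => ⟨fun h0 => h h0, fun h1 => h h1⟩
  · rintro ⟨c0, c1⟩ x hx
    fin_cases x
    · exact c0 hx
    · exact c1 hx

lemma q2_of_quad {N : ℕ} (F : Set (Finset (Fin N))) (W0 W1 W2 W3 : Finset (Fin N))
    (hm0 : W0 ∈ F) (hm1 : W1 ∈ F) (hm2 : W2 ∈ F) (hm3 : W3 ∈ F)
    (h01 : W0 ⊆ W1) (h02 : W0 ⊆ W2) (h13 : W1 ⊆ W3) (h23 : W2 ⊆ W3)
    (h12 : ¬ W1 ⊆ W2) (h21 : ¬ W2 ⊆ W1) (h10 : ¬ W1 ⊆ W0) (h20 : ¬ W2 ⊆ W0)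
    (h31 : ¬ W3 ⊆ W1) (h32 : ¬ W3 ⊆ W2) (h30 : ¬ W3 ⊆ W0) :
    ∃ φ : Finset (Fin 2) → Finset (Fin N),
      Function.Injective φ ∧ (∀ A, φ A ∈ F) ∧
      ∀ A B : Finset (Fin 2), A ⊆ B ↔ φ A ⊆ φ B := by
  classical
  set φ : Finset (Fin 2) → Finset (Fin N) := fun A =>
    if 0 ∈ A then (if 1 ∈ A then W3 else W1) else (if 1 ∈ A then W2 else W0) with hφ
  have hiff : ∀ A B : Finset (Fin 2), A ⊆ B ↔ φ A ⊆ φ B := by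
    intro A B
    by_cases hA0 : (0 : Fin 2) ∈ A <;> by_cases hA1 : (1 : Fin 2) ∈ A <;>
      by_cases hB0 : (0 : Fin 2) ∈ B <;> by_cases hB1 : (1 : Fin 2) ∈ B <;>
      simp only [hφ, subset_fin2, hA0, hA1, hB0, hB1, if_true, if_false,
        eq_self_iff_true, not_true, not_false_iff, true_implies, false_implies,
        implies_true, true_and, and_true, and_self, true_iff, iff_true, false_iff,
        imp_false, if_pos, if_neg] <;>
      first
        | exact subset_rfl
        | exact h01
        | exact h02
        | exact h13
        | exact h23
        | exact h01.trans h13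
        | exact h12
        | exact h21
        | exact h10
        | exact h20
        | exact h31
        | exact h32
        | exact h30
  refine ⟨φ, inj_of_iff hiff, ?_, hiff⟩
  intro A
  by_cases hA0 : (0 : Fin 2) ∈ A <;> by_cases hA1 : (1 : Fin 2) ∈ A <;>
    simp only [hφ, hA0, hA1, if_true, if_false, if_pos, if_neg, not_false_iff]
  · exact hm3
  · exact hm1
  · exact hm2
  · exact hm0


/-! ### The blue branch -/

lemma blue_embedding {n k : ℕ} (Blue : Set (Finset (Fin (n + k))))
    (hall : ∀ σ : Equiv.Perm (Fin k), ∃ Z, IsLadder Blue σ Z)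
    (hcard : 4 ^ n < Nat.factorial k) :
    ∃ φ : Finset (Fin 2) → Finset (Fin (n + k)),
      Function.Injective φ ∧ (∀ A, φ A ∈ Blue) ∧
      ∀ A B : Finset (Fin 2), A ⊆ B ↔ φ A ⊆ φ B := by
  classical
  choose Z hZ using hall
  -- pigeonhole on the endpoints of the ladders
  have hlt : Fintype.card (Finset (Fin n) × Finset (Fin n)) <
      Fintype.card (Equiv.Perm (Fin k)) := by
    have h1 : Fintype.card (Equiv.Perm (Fin k)) = Nat.factorial k := by
      rw [Fintype.card_perm, Fintype.card_fin]
    have h2 : Fintype.card (Finset (Fin n) × Finset (Fin n)) = 4 ^ n := by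
      rw [Fintype.card_prod, Fintype.card_finset, Fintype.card_fin, ← mul_pow]
      norm_num
    rw [h1, h2]
    exact hcard
  obtain ⟨σ, σ', hne, heq⟩ :=
    Fintype.exists_ne_map_eq_of_card_lt
      (fun σ : Equiv.Perm (Fin k) => ((Z σ 0 : Finset (Fin n)), Z σ k)) hlt
  have heq0 : Z σ 0 = Z σ' 0 := congrArg Prod.fst heq
  have heqk : Z σ k = Z σ' k := congrArg Prod.snd heq
  -- least index where σ and σ' differ
  have hex : ∃ j : Fin k, σ j ≠ σ' j := by
    by_contra h
    push_neg at h
    exact hne (Equiv.ext h)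
  obtain ⟨j₀, hj₀⟩ := hex
  set s : Finset (Fin k) := Finset.univ.filter (fun j => σ j ≠ σ' j) with hs
  have hsne : s.Nonempty := ⟨j₀, by simp [hs, hj₀]⟩
  set i : Fin k := s.min' hsne with hidef
  have hi : σ i ≠ σ' i := by
    have := s.min'_mem hsne
    simpa [hs] using this
  have hprefix : ∀ j : Fin k, (j : ℕ) < (i : ℕ) → σ j = σ' j := by
    intro j hj
    by_contra hne'
    have hij : i ≤ j := s.min'_le j (by simp [hs, hne'])
    have : (i : ℕ) ≤ (j : ℕ) := hij
    omega
  -- i+1 < k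
  have hik : (i : ℕ) + 1 < k := by
    by_contra hcon
    push_neg at hcon
    have hmax : ∀ j : Fin k, j ≠ i → (j : ℕ) < (i : ℕ) := by
      intro j hj
      have h1 : (j : ℕ) < k := j.is_lt
      have h2 : (j : ℕ) ≠ (i : ℕ) := fun h => hj (Fin.ext h)
      omega
    obtain ⟨j0, hj0⟩ : ∃ j0, σ' j0 = σ i := ⟨σ'.symm (σ i), by simp⟩
    by_cases hj0i : j0 = i
    · exact hi (by rw [← hj0, hj0i])
    · have hlt' := hmax j0 hj0i
      have he1 : σ j0 = σ' j0 := hprefix j0 hlt'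
      have he2 : σ j0 = σ i := by rw [he1, hj0]
      exact hj0i (σ.injective he2)
  have hik' : (i : ℕ) + 1 ≤ k := le_of_lt hik
  -- names
  set a : Fin k := σ i with ha
  set b : Fin k := σ' i with hb
  have hab : a ≠ b := hi
  -- membership facts for a and b in the initial segments
  have haT : a ∈ Tst σ ((i : ℕ) + 1) := apply_mem_Tst.2 (by omega)
  have hbT : b ∈ Tst σ' ((i : ℕ) + 1) := apply_mem_Tst.2 (by omega)
  have haT' : a ∉ Tst σ' ((i : ℕ) + 1) := by
    intro hmem
    rw [mem_Tst] at hmem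
    set j := σ'.symm a with hj
    have hja : σ' j = a := by simp [hj]
    have hjval : (j : ℕ) < (i : ℕ) + 1 := hmem
    rcases Nat.lt_or_ge (j : ℕ) (i : ℕ) with hlt' | hge'
    · have : σ j = σ' j := hprefix j hlt'
      have : σ j = a := by rw [this, hja]
      have hji : j = i := σ.injective (this.trans ha)
      rw [hji] at hlt'
      omega
    · have hji : (j : ℕ) = (i : ℕ) := by omega
      have : j = i := Fin.ext hji
      rw [this] at hja
      exact hab (ha.trans hja.symm)
  have hbT2 : b ∉ Tst σ ((i : ℕ) + 1) := by
    intro hmem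
    rw [mem_Tst] at hmem
    set j := σ.symm b with hj
    have hja : σ j = b := by simp [hj]
    have hjval : (j : ℕ) < (i : ℕ) + 1 := hmem
    rcases Nat.lt_or_ge (j : ℕ) (i : ℕ) with hlt' | hge'
    · have h1 : σ j = σ' j := hprefix j hlt'
      have h2 : σ' j = b := by rw [← h1, hja]
      have hji : j = i := σ'.injective (h2.trans hb)
      rw [hji] at hlt'
      omega
    · have hji : (j : ℕ) = (i : ℕ) := by omega
      have : j = i := Fin.ext hji
      rw [this] at hja
      exact hab (hja ▸ ha)
  -- the four blue sets
  obtain ⟨hmonoσ, hblueσ⟩ := hZ σ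
  obtain ⟨hmonoσ', hblueσ'⟩ := hZ σ'
  set W0 : Finset (Fin (n + k)) := pr n k (Z σ 0) (Tst σ 0) with hW0
  set W1 : Finset (Fin (n + k)) := pr n k (Z σ ((i : ℕ) + 1)) (Tst σ ((i : ℕ) + 1)) with hW1
  set W2 : Finset (Fin (n + k)) := pr n k (Z σ' ((i : ℕ) + 1)) (Tst σ' ((i : ℕ) + 1)) with hW2
  set W3 : Finset (Fin (n + k)) := pr n k (Z σ' k) (Tst σ' k) with hW3
  have hm0 : W0 ∈ Blue := hblueσ 0 (Nat.zero_le k)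
  have hm1 : W1 ∈ Blue := hblueσ ((i : ℕ) + 1) hik'
  have hm2 : W2 ∈ Blue := hblueσ' ((i : ℕ) + 1) hik'
  have hm3 : W3 ∈ Blue := hblueσ' k le_rfl
  have h01 : W0 ⊆ W1 :=
    pr_subset_iff.2 ⟨hmonoσ 0 ((i : ℕ) + 1) (Nat.zero_le _) hik', Tst_mono σ (Nat.zero_le _)⟩
  have h02 : W0 ⊆ W2 := by
    refine pr_subset_iff.2 ⟨?_, ?_⟩
    · rw [heq0]
      exact hmonoσ' 0 ((i : ℕ) + 1) (Nat.zero_le _) hik'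
    · rw [Tst_zero]
      exact Finset.empty_subset _
  have h13 : W1 ⊆ W3 := by
    refine pr_subset_iff.2 ⟨?_, ?_⟩
    · have h1 : Z σ ((i : ℕ) + 1) ⊆ Z σ k := hmonoσ ((i : ℕ) + 1) k hik' le_rfl
      rw [heqk] at h1
      exact h1
    · rw [Tst_top]
      exact Finset.subset_univ _
  have h23 : W2 ⊆ W3 :=
    pr_subset_iff.2 ⟨hmonoσ' ((i : ℕ) + 1) k hik' le_rfl, Tst_mono σ' hik'⟩
  have h12 : ¬ W1 ⊆ W2 := fun h => haT' ((pr_subset_iff.1 h).2 haT)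
  have h21 : ¬ W2 ⊆ W1 := fun h => hbT2 ((pr_subset_iff.1 h).2 hbT)
  have h10 : ¬ W1 ⊆ W0 := by
    intro h
    have := (pr_subset_iff.1 h).2 haT
    rw [Tst_zero] at this
    exact absurd this (Finset.notMem_empty a)
  have h20 : ¬ W2 ⊆ W0 := by
    intro h
    have := (pr_subset_iff.1 h).2 hbT
    rw [Tst_zero] at this
    exact absurd this (Finset.notMem_empty b)
  have haU : a ∈ Tst σ' k := by rw [Tst_top]; exact Finset.mem_univ a
  have h31 : ¬ W3 ⊆ W1 := by
    intro h
    have h1 := (pr_subset_iff.1 h).2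
    have h2 : b ∈ Tst σ' k := by rw [Tst_top]; exact Finset.mem_univ b
    exact hbT2 (h1 h2)
  have h32 : ¬ W3 ⊆ W2 := fun h => haT' ((pr_subset_iff.1 h).2 haU)
  have h30 : ¬ W3 ⊆ W0 := by
    intro h
    have := (pr_subset_iff.1 h).2 haU
    rw [Tst_zero] at this
    exact absurd this (Finset.notMem_empty a)
  exact q2_of_quad Blue W0 W1 W2 W3 hm0 hm1 hm2 hm3 h01 h02 h13 h23 h12 h21 h10 h20 h31 h32 h30



lemma pow_le_two_mul_factorial (m : ℕ) : m ^ m ≤ Nat.factorial (2 * m) := by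
  have key : ∀ j, j ≤ m → m ^ j * Nat.factorial (2 * m - j) ≤ Nat.factorial (2 * m) := by
    intro j
    induction j with
    | zero => intro _; simp
    | succ j ih =>
      intro hj
      have hj' : j ≤ m := by omega
      have h1 : 2 * m - j = (2 * m - (j + 1)) + 1 := by omega
      have h2 : m ^ (j + 1) * Nat.factorial (2 * m - (j + 1)) ≤
          m ^ j * Nat.factorial (2 * m - j) := by
        rw [h1, Nat.factorial_succ, pow_succ]
        have hm : m ≤ 2 * m - (j + 1) + 1 := by omega
        calc m ^ j * m * Nat.factorial (2 * m - (j + 1))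
            = m ^ j * (m * Nat.factorial (2 * m - (j + 1))) := by ring
          _ ≤ m ^ j * ((2 * m - (j + 1) + 1) * Nat.factorial (2 * m - (j + 1))) :=
              Nat.mul_le_mul_left _ (Nat.mul_le_mul_right _ hm)
      exact h2.trans (ih hj')
  have h3 := key m le_rfl
  have h4 : 2 * m - m = m := by omega
  rw [h4] at h3
  calc m ^ m = m ^ m * 1 := (mul_one _).symm
    _ ≤ m ^ m * Nat.factorial m := Nat.mul_le_mul_left _ (Nat.one_le_iff_ne_zero.2
        (Nat.factorial_ne_zero m))
    _ ≤ Nat.factorial (2 * m) := h3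

lemma log_le_div_e {y : ℝ} (hy : 0 < y) : Real.log y ≤ y / Real.exp 1 := by
  have h1 : Real.log (y / Real.exp 1) ≤ y / Real.exp 1 - 1 :=
    Real.log_le_sub_one_of_pos (by positivity)
  have h2 : Real.log (y / Real.exp 1) = Real.log y - 1 := by
    rw [Real.log_div (ne_of_gt hy) (ne_of_gt (Real.exp_pos 1)), Real.log_exp]
  linarith

lemma eleven_le_k (n : ℕ) (hn : 2 ≤ n) : 11 ≤ ⌊(6.14 : ℝ) * n / Real.logb 2 n⌋₊ := by
  have hn1 : (1 : ℝ) < (n : ℝ) := by exact_mod_cast Nat.lt_of_lt_of_le one_lt_two hn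
  have hn0 : (0 : ℝ) < (n : ℝ) := by linarith
  have hlogn : 0 < Real.log n := Real.log_pos hn1
  have hx : (11 : ℝ) ≤ 6.14 * n / Real.logb 2 n := by
    rw [Real.logb, div_div_eq_mul_div, le_div_iff₀ hlogn]
    have h1 : Real.log n * Real.exp 1 ≤ n := by
      have := log_le_div_e hn0
      rw [le_div_iff₀ (Real.exp_pos 1)] at this
      exact this
    have he : (2.7182818283 : ℝ) < Real.exp 1 := Real.exp_one_gt_d9
    have hl2 : (0.6931471803 : ℝ) < Real.log 2 := Real.log_two_gt_d9
    have hln_nonneg : 0 ≤ Real.log n := le_of_lt hlogn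
    nlinarith [mul_le_mul_of_nonneg_left he.le hln_nonneg,
      mul_le_mul_of_nonneg_left hl2.le (le_of_lt hn0)]
  exact Nat.le_floor (by exact_mod_cast hx)

set_option maxHeartbeats 2000000 in
lemma key_arith (n : ℕ) (hn : 2 ≤ n) :
    4 ^ n < Nat.factorial ⌊(6.14 : ℝ) * n / Real.logb 2 n⌋₊ := by
  have h11 : 11 ≤ ⌊(6.14 : ℝ) * n / Real.logb 2 n⌋₊ := eleven_le_k n hn
  set k : ℕ := ⌊(6.14 : ℝ) * n / Real.logb 2 n⌋₊ with hkdef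
  rcases le_or_gt n 12 with h12 | h13
  · calc 4 ^ n ≤ 4 ^ 12 := Nat.pow_le_pow_right (by norm_num) h12
      _ < Nat.factorial 11 := by norm_num [Nat.factorial]
      _ ≤ Nat.factorial k := Nat.factorial_le h11
  · -- n ≥ 13
    set m : ℕ := k / 2 with hmdef
    have h2m : 2 * m ≤ k := by omega
    have hm5 : 5 ≤ m := by omega
    -- real estimates
    have hn13 : (13 : ℝ) ≤ (n : ℝ) := by exact_mod_cast h13
    have hn0 : (0 : ℝ) < (n : ℝ) := by linarith
    have hn1 : (1 : ℝ) < (n : ℝ) := by linarith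
    set u : ℝ := Real.log n with hudef
    have hu : 0 < u := Real.log_pos hn1
    have hl2a : (0.6931471803 : ℝ) < Real.log 2 := Real.log_two_gt_d9
    have hl2b : Real.log 2 < (0.6931471808 : ℝ) := Real.log_two_lt_d9
    -- log 3 ≤ 1.1004
    have hlog3 : Real.log 3 ≤ 1.1004 := by
      have hs : (1.414213 : ℝ) ≤ Real.sqrt 2 := by
        rw [show (1.414213 : ℝ) = √(1.414213 ^ 2) by
              rw [Real.sqrt_sq]; norm_num]
        exact Real.sqrt_le_sqrt (by norm_num)
      have hs0 : (0 : ℝ) < Real.sqrt 2 := by positivity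
      have h2s : (0 : ℝ) < 2 * Real.sqrt 2 := by positivity
      have hlog2s : Real.log (2 * Real.sqrt 2) = Real.log 2 + Real.log 2 / 2 := by
        rw [Real.log_mul (by norm_num) (ne_of_gt hs0), Real.log_sqrt (by norm_num)]
      have hdiv : Real.log (3 / (2 * Real.sqrt 2)) ≤ 3 / (2 * Real.sqrt 2) - 1 :=
        Real.log_le_sub_one_of_pos (by positivity)
      have hlogeq : Real.log (3 / (2 * Real.sqrt 2)) =
          Real.log 3 - Real.log (2 * Real.sqrt 2) :=
        Real.log_div (by norm_num) (ne_of_gt h2s)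
      have hfrac : 3 / (2 * Real.sqrt 2) ≤ 1.0606612 := by
        rw [div_le_iff₀ h2s]
        nlinarith [hs]
      rw [hlogeq, hlog2s] at hdiv
      nlinarith [hdiv, hl2b, hfrac]
    -- log 13 ≤ 2.6081
    have hlog13 : Real.log 13 ≤ 2.6081 := by
      have h1 : Real.log 13 ≤ Real.log (27 / 2) :=
        Real.log_le_log (by norm_num) (by norm_num)
      have h2 : Real.log (27 / 2 : ℝ) = 3 * Real.log 3 - Real.log 2 := by
        rw [Real.log_div (by norm_num) (by norm_num),
          show (27 : ℝ) = 3 ^ 3 by norm_num, Real.log_pow]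
        push_cast
        ring
      rw [h2] at h1
      nlinarith [hlog3, hl2a]
    -- 13 u ≤ 2.6081 n
    have hnu : 13 * u ≤ 2.6081 * n := by
      have h1 : Real.log ((n : ℝ) / 13) ≤ (n : ℝ) / 13 - 1 :=
        Real.log_le_sub_one_of_pos (by positivity)
      have h2 : Real.log ((n : ℝ) / 13) = u - Real.log 13 :=
        Real.log_div (ne_of_gt hn0) (by norm_num)
      rw [h2] at h1
      nlinarith [hlog13, hn13]
    -- floor bound: 6.14 n log 2 < (k+1) u
    have hfloor : (6.14 : ℝ) * n / Real.logb 2 n < (k : ℝ) + 1 := by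
      have := Nat.lt_floor_add_one ((6.14 : ℝ) * n / Real.logb 2 n)
      rw [← hkdef] at this
      exact_mod_cast this
    have hkx : 6.14 * (n : ℝ) * Real.log 2 < ((k : ℝ) + 1) * u := by
      rw [Real.logb, div_div_eq_mul_div, div_lt_iff₀ hu] at hfloor
      linarith
    -- m bound: k ≤ 2m + 1
    have hk2m : (k : ℝ) ≤ 2 * (m : ℝ) + 1 := by
      have : k ≤ 2 * m + 1 := by omega
      exact_mod_cast this
    -- m * u ≥ 1.92 n
    have hmu : 1.92 * (n : ℝ) ≤ (m : ℝ) * u := by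
      have h6 : (4.2559 : ℝ) * n ≤ 6.14 * n * Real.log 2 := by nlinarith [hl2a, hn0]
      -- (2m+2) u > 4.2559 n, and 2u ≤ (2*2.6081/13) n ≤ 0.40125 n
      have h7 : 2 * u ≤ 0.40125 * n := by nlinarith [hnu]
      nlinarith [hkx, hk2m, hu]
    -- m ≥ 1.92 n / u, so log m ≥ log(1.92 n / u)
    have hm0 : (0 : ℝ) < (m : ℝ) := by
      have : (0 : ℕ) < m := by omega
      exact_mod_cast this
    set t0 : ℝ := 1.92 * n / u with ht0def
    have ht0pos : 0 < t0 := by positivity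
    have hmt : t0 ≤ (m : ℝ) := by
      rw [ht0def, div_le_iff₀ hu]
      exact hmu
    have hlogt0 : Real.log t0 = Real.log 1.92 + u - Real.log u := by
      rw [ht0def, Real.log_div (by positivity) (ne_of_gt hu),
        Real.log_mul (by norm_num) (ne_of_gt hn0)]
    have hl192 : (0.479 : ℝ) ≤ Real.log 1.92 := by
      have h1 : Real.log ((1.92 : ℝ)⁻¹) ≤ (1.92 : ℝ)⁻¹ - 1 :=
        Real.log_le_sub_one_of_pos (by norm_num)
      rw [Real.log_inv] at h1
      have h2 : ((1.92 : ℝ)⁻¹ : ℝ) = 25 / 48 := by norm_num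
      rw [h2] at h1
      linarith only [h1]
    have hlogu : Real.log u ≤ u / 4 + 2 * Real.log 2 - 1 := by
      have h1 : Real.log (u / 4) ≤ u / 4 - 1 :=
        Real.log_le_sub_one_of_pos (by positivity)
      have h2 : Real.log (u / 4) = Real.log u - Real.log 4 :=
        Real.log_div (ne_of_gt hu) (by norm_num)
      have h3 : Real.log (4 : ℝ) = 2 * Real.log 2 := by
        rw [show (4 : ℝ) = 2 ^ 2 by norm_num, Real.log_pow]
        push_cast
        ring
      rw [h2, h3] at h1
      linarith only [h1]
    have hlogm : 0.75 * u + 0.09 ≤ Real.log (m : ℝ) := by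
      have h1 : Real.log t0 ≤ Real.log (m : ℝ) := Real.log_le_log ht0pos hmt
      rw [hlogt0] at h1
      linarith only [h1, hlogu, hl192, hl2b]
    -- final: n log 4 < m log m
    have hfinal : (n : ℝ) * Real.log 4 < (m : ℝ) * Real.log (m : ℝ) := by
      have h3 : Real.log (4 : ℝ) = 2 * Real.log 2 := by
        rw [show (4 : ℝ) = 2 ^ 2 by norm_num, Real.log_pow]
        push_cast
        ring
      have h4 : (m : ℝ) * (0.75 * u + 0.09) ≤ (m : ℝ) * Real.log (m : ℝ) :=
        mul_le_mul_of_nonneg_left hlogm (le_of_lt hm0)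
      have h5 : (m : ℝ) * (0.75 * u + 0.09) = 0.75 * ((m : ℝ) * u) + 0.09 * m := by ring
      have h6 : (n : ℝ) * (2 * Real.log 2) ≤ (n : ℝ) * 1.3862943616 :=
        mul_le_mul_of_nonneg_left (by linarith only [hl2b]) (le_of_lt hn0)
      have h7 : (0 : ℝ) ≤ 0.09 * (m : ℝ) := by positivity
      rw [h3]
      linarith only [h4, h5, h6, h7, hmu, hn0]
    -- conclude in ℕ
    have hpow : (4 : ℝ) ^ n < (m : ℝ) ^ m := by
      have hlt : Real.log ((4 : ℝ) ^ n) < Real.log ((m : ℝ) ^ m) := by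
        rw [Real.log_pow, Real.log_pow]
        exact_mod_cast hfinal
      have h4pos : (0 : ℝ) < (4 : ℝ) ^ n := by positivity
      have hmpos : (0 : ℝ) < (m : ℝ) ^ m := by positivity
      exact (Real.log_lt_log_iff h4pos hmpos).1 hlt
    have hnat : 4 ^ n < m ^ m := by exact_mod_cast hpow
    calc 4 ^ n < m ^ m := hnat
      _ ≤ Nat.factorial (2 * m) := pow_le_two_mul_factorial m
      _ ≤ Nat.factorial k := Nat.factorial_le h2m


end IndRamseyAux

/-- For every `n ≥ 2`, with `N = n + ⌊6.14·n/log₂ n⌋`, every partition of `Q_N` into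
families `B` and `R` yields a blue induced copy of `Q_2` or a red induced copy of `Q_n`;
i.e. `R(Q_2, Q_n) ≤ n + 6.14·n/log₂ n` for all `n ≥ 2`. -/
theorem induced_ramsey_Q2_Qn_upper_explicit :
    ∀ n : ℕ, 2 ≤ n →
      ∀ B R : Set (Finset (Fin (n + ⌊(6.14 : ℝ) * n / Real.logb 2 n⌋₊))),
        B ∪ R = Set.univ → B ∩ R = ∅ →
        ContainsInducedCopy 2 (n + ⌊(6.14 : ℝ) * n / Real.logb 2 n⌋₊) B ∨
        ContainsInducedCopy n (n + ⌊(6.14 : ℝ) * n / Real.logb 2 n⌋₊) R := by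
  intro n hn B R hU _hD
  classical
  by_cases hall : ∀ σ : Equiv.Perm (Fin ⌊(6.14 : ℝ) * n / Real.logb 2 n⌋₊),
      ∃ Z, IndRamseyAux.IsLadder B σ Z
  · left
    obtain ⟨φ, h1, h2, h3⟩ :=
      IndRamseyAux.blue_embedding B hall (IndRamseyAux.key_arith n hn)
    exact ⟨φ, h1, h2, h3⟩
  · right
    push_neg at hall
    obtain ⟨σ, hσ⟩ := hall
    obtain ⟨φ, hnot, hiff⟩ := IndRamseyAux.red_embedding B σ (not_exists.2 hσ)
    refine ⟨φ, IndRamseyAux.inj_of_iff hiff, fun A => ?_, hiff⟩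
    have hmem : φ A ∈ B ∪ R := by
      rw [hU]
      exact Set.mem_univ _
    rcases hmem with h | h
    · exact absurd h (hnot A)
    · exact h
end

section
/- Let n, k ∈ ℕ, let the Boolean lattice Q_{n+k} be partitioned into families B and R, identify [n] as a subset of [n+k], and let π be a permutation of [n+k]∖[n] = {n+1,…,n+k}. Then there exist functions φ: Q_n → R ∪ {⊥} (where ⊥ is a symbol indicating failure, distinct from all sets), α: Q_n → {0,1,…,k+1}, and f assigning to each A ∈ Q_n a chain f(A) = (f(A)_0 ⊆ f(A)_1 ⊆ … ⊆ f(A)_{α(A)−1}) of sets belonging to B, satisfying: (P1) if A, A′ ⊆ [n] and φ(A) ≠ ⊥ and φ(A′) ≠ ⊥, then A′ ⊊ A if and only if φ(A′) ⊊ φ(A); (P2) if A′ ⊆ A ⊆ [n], then α(A′) ≤ α(A); (P3) if α(A) = k+1 then φ(A) = ⊥, and otherwise φ(A) = A ∪ {π(n+1), π(n+2), …, π(n+α(A))} (in particular φ(A) ∩ [n] = A); (P4) for every A ⊆ [n], f(A) is a chain in B of length exactly α(A) with f(A)_i ∖ [n] = {π(n+1), π(n+2), …, π(n+i)} for each 0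 ≤ i ≤ α(A)−1; (P5) if 1 ≤ α(A) ≤ k, then f(A)_{α(A)−1} ⊆ φ(A). -/
/-- The subsets of `[n]`, viewed inside `[n+k]`: the image of `A : Finset (Fin n)`
under the canonical embedding `Fin n ↪ Fin (n+k)`. -/
def embedLow (n k : ℕ) (A : Finset (Fin n)) : Finset (Fin (n + k)) :=
  A.map (Fin.castLEEmb (Nat.le_add_right n k))

/-- The set `[n]` viewed as a subset of `[n+k]`. -/
def lowPart (n k : ℕ) : Finset (Fin (n + k)) :=
  Finset.univ.filter (fun x : Fin (n + k) => (x : ℕ) < n)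

/-- The set `{π(n+1), π(n+2), …, π(n+i)}`, where the permutation `π` of
`[n+k] ∖ [n]` is modeled as an injection `π : Fin k → Fin (n+k)` whose values have
index `≥ n` (its `j`-th value playing the role of `π(n+j+1)`). -/
def firstVals (n k : ℕ) (π : Fin k → Fin (n + k)) (i : ℕ) : Finset (Fin (n + k)) :=
  (Finset.univ.filter (fun j : Fin k => (j : ℕ) < i)).image π

theorem hexlem (n k : ℕ) (R : Set (Finset (Fin (n + k)))) (π : Fin k → Fin (n + k))
    (A : Finset (Fin n)) (j : ℕ) :
    ∃ i, j ≤ i ∧ (i ≤ k → embedLow n k A ∪ firstVals n k π i ∈ R) :=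
  ⟨max j (k+1), le_max_left _ _, fun h => absurd ((le_max_right _ _).trans h) (by omega)⟩

open Classical in
noncomputable def findA (n k : ℕ) (R : Set (Finset (Fin (n + k)))) (π : Fin k → Fin (n + k))
    (A : Finset (Fin n)) (j : ℕ) : ℕ :=
  Nat.find (hexlem n k R π A j)

noncomputable def D (n k : ℕ) (R : Set (Finset (Fin (n + k)))) (π : Fin k → Fin (n + k)) :
    Finset (Fin n) → ℕ × (ℕ → Finset (Fin (n + k)))
  | A =>
    (findA n k R π A (A.ssubsets.attach.sup fun t => (D n k R π t.1).1),
     fun i => if i < A.ssubsets.attach.sup (fun t => (D n k R π t.1).1) then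
        (if h : A.ssubsets.attach.Nonempty then
          (D n k R π (A.ssubsets.attach.exists_mem_eq_sup h fun t => (D n k R π t.1).1).choose.1).2
         else fun _ => ∅) i
      else embedLow n k A ∪ firstVals n k π i)
  termination_by A => A.card
  decreasing_by
    all_goals exact Finset.card_lt_card (Finset.mem_ssubsets.mp (Subtype.prop _))

variable {n k : ℕ} {R : Set (Finset (Fin (n + k)))} {π : Fin k → Fin (n + k)}

/-- abbreviation for the sup over proper subsets -/
noncomputable def jj (n k : ℕ) (R : Set (Finset (Fin (n + k)))) (π : Fin k → Fin (n + k))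
    (A : Finset (Fin n)) : ℕ :=
  A.ssubsets.attach.sup fun t => (D n k R π t.1).1

open Classical in
theorem D_fst (A : Finset (Fin n)) :
    (D n k R π A).1 = Nat.find (hexlem n k R π A (jj n k R π A)) := by
  rw [D]
  rfl

theorem D_snd_ge (A : Finset (Fin n)) (i : ℕ) (h : jj n k R π A ≤ i) :
    (D n k R π A).2 i = embedLow n k A ∪ firstVals n k π i := by
  unfold jj at h
  rw [D]
  dsimp only
  rw [if_neg (Nat.not_lt.mpr h)]

theorem D_snd_lt (A : Finset (Fin n)) (h : 1 ≤ jj n k R π A) :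
    ∃ C : Finset (Fin n), C ⊂ A ∧ (D n k R π C).1 = jj n k R π A ∧
      ∀ i, i < jj n k R π A → (D n k R π A).2 i = (D n k R π C).2 i := by
  have hne : A.ssubsets.attach.Nonempty := by
    by_contra hne
    rw [Finset.not_nonempty_iff_eq_empty] at hne
    unfold jj at h
    rw [hne] at h
    simp at h
  obtain ⟨hc1, hc2⟩ := (A.ssubsets.attach.exists_mem_eq_sup hne
      fun t => (D n k R π t.1).1).choose_spec
  refine ⟨_, Finset.mem_ssubsets.mp (Subtype.prop _), hc2.symm, fun i hi => ?_⟩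
  unfold jj at hi
  rw [D]
  dsimp only
  rw [if_pos hi, dif_pos hne]

open Classical in
theorem jj_le_alpha (A : Finset (Fin n)) : jj n k R π A ≤ (D n k R π A).1 := by
  rw [D_fst]
  exact (Nat.find_spec (hexlem n k R π A (jj n k R π A))).1

open Classical in
theorem alpha_mem_R (A : Finset (Fin n)) (h : (D n k R π A).1 ≤ k) :
    embedLow n k A ∪ firstVals n k π (D n k R π A).1 ∈ R := by
  have := (Nat.find_spec (hexlem n k R π A (jj n k R π A))).2
  rw [← D_fst] at this
  exact this h

open Classical in
theorem alpha_min (A : Finset (Fin n)) (i : ℕ) (hji : jj n k R π A ≤ i)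
    (hi : i < (D n k R π A).1) : i ≤ k ∧ embedLow n k A ∪ firstVals n k π i ∉ R := by
  rw [D_fst] at hi
  have := Nat.find_min (hexlem n k R π A (jj n k R π A)) hi
  push_neg at this
  obtain ⟨h1, h2⟩ := this hji
  exact ⟨Nat.lt_succ_iff.mp (by omega), h2⟩

open Classical in
theorem alpha_le (A : Finset (Fin n)) (h : jj n k R π A ≤ k + 1) :
    (D n k R π A).1 ≤ k + 1 := by
  rw [D_fst]
  exact Nat.find_le ⟨h, fun hk => absurd hk (by omega)⟩

theorem alpha_le_jj (A A' : Finset (Fin n)) (h : A' ⊂ A) :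
    (D n k R π A').1 ≤ jj n k R π A :=
  Finset.le_sup (f := fun t => (D n k R π t.1).1)
    (Finset.mem_attach _ (⟨A', Finset.mem_ssubsets.mpr h⟩ : {x // x ∈ A.ssubsets}))

-- helper set lemmas
theorem mem_embedLow_lt {A : Finset (Fin n)} {x : Fin (n + k)} (hx : x ∈ embedLow n k A) :
    (x : ℕ) < n := by
  simp only [embedLow, Finset.mem_map, Fin.castLEEmb] at hx
  obtain ⟨a, _, rfl⟩ := hx
  exact a.2

theorem mem_firstVals_ge (hπtop : ∀ j : Fin k, n ≤ ((π j) : ℕ)) {i : ℕ} {x : Fin (n + k)}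
    (hx : x ∈ firstVals n k π i) : n ≤ (x : ℕ) := by
  simp only [firstVals, Finset.mem_image] at hx
  obtain ⟨a, _, rfl⟩ := hx
  exact hπtop a

theorem firstVals_mono {i i' : ℕ} (h : i ≤ i') :
    firstVals n k π i ⊆ firstVals n k π i' := by
  apply Finset.image_subset_image
  intro x hx
  simp only [Finset.mem_filter] at hx ⊢
  exact ⟨hx.1, lt_of_lt_of_le hx.2 h⟩

theorem cand_mono {A A' : Finset (Fin n)} {i i' : ℕ} (hA : A ⊆ A') (hi : i ≤ i') :
    embedLow n k A ∪ firstVals n k π i ⊆ embedLow n k A' ∪ firstVals n k π i' :=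
  Finset.union_subset_union (Finset.map_subset_map.mpr hA) (firstVals_mono hi)

theorem mem_lowPart {x : Fin (n + k)} : x ∈ lowPart n k ↔ (x : ℕ) < n := by
  simp [lowPart]

theorem cand_sdiff (hπtop : ∀ j : Fin k, n ≤ ((π j) : ℕ)) (A : Finset (Fin n)) (i : ℕ) :
    (embedLow n k A ∪ firstVals n k π i) \ lowPart n k = firstVals n k π i := by
  ext x
  simp only [Finset.mem_sdiff, Finset.mem_union, mem_lowPart]
  constructor
  · rintro ⟨h1 | h1, h2⟩
    · exact absurd (mem_embedLow_lt h1) h2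
    · exact h1
  · intro hx
    exact ⟨Or.inr hx, by have := mem_firstVals_ge hπtop hx; omega⟩

theorem main_inv {B : Set (Finset (Fin (n + k)))} (hunion : B ∪ R = Set.univ)
    (hπtop : ∀ j : Fin k, n ≤ ((π j) : ℕ)) (A : Finset (Fin n)) :
    (D n k R π A).1 ≤ k + 1 ∧
    (∀ i1 i2 : ℕ, i1 ≤ i2 → i2 < (D n k R π A).1 →
      (D n k R π A).2 i1 ⊆ (D n k R π A).2 i2) ∧
    (∀ i : ℕ, i < (D n k R π A).1 →
      (D n k R π A).2 i ∈ B ∧ (D n k R π A).2 i \ lowPart n k = firstVals n k π i) ∧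
    (1 ≤ (D n k R π A).1 → (D n k R π A).1 ≤ k →
      (D n k R π A).2 ((D n k R π A).1 - 1) ⊆
        embedLow n k A ∪ firstVals n k π (D n k R π A).1) := by
  have hB : ∀ T : Finset (Fin (n + k)), T ∉ R → T ∈ B := by
    intro T hT
    have hT2 : T ∈ B ∪ R := hunion ▸ Set.mem_univ T
    exact hT2.resolve_right hT
  induction A using Finset.strongInduction with
  | _ A ih =>
  have hja : jj n k R π A ≤ (D n k R π A).1 := jj_le_alpha A
  by_cases hj : 1 ≤ jj n k R π A
  · obtain ⟨C, hCA, hCα, hfe⟩ := D_snd_lt A hj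
    obtain ⟨ihk, ihchain, ihmem, ih5⟩ := ih C hCA
    rw [hCα] at ihk ihchain ihmem ih5
    have hbridge : ∀ i2, jj n k R π A ≤ i2 → i2 ≤ k → ∀ i1, i1 < jj n k R π A →
        (D n k R π A).2 i1 ⊆ embedLow n k A ∪ firstVals n k π i2 := by
      intro i2 h2 h2k i1 h1
      rw [hfe i1 h1]
      calc (D n k R π C).2 i1 ⊆ (D n k R π C).2 (jj n k R π A - 1) :=
            ihchain i1 _ (by omega) (by omega)
        _ ⊆ embedLow n k C ∪ firstVals n k π (jj n k R π A) := ih5 hj (by omega)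
        _ ⊆ embedLow n k A ∪ firstVals n k π i2 := cand_mono hCA.subset h2
    refine ⟨alpha_le A (by omega), ?_, ?_, ?_⟩
    · intro i1 i2 h12 h2
      rcases lt_or_ge i2 (jj n k R π A) with h | h
      · rw [hfe i1 (by omega), hfe i2 h]
        exact ihchain i1 i2 h12 (by omega)
      · rcases lt_or_ge i1 (jj n k R π A) with h1 | h1
        · rw [D_snd_ge A i2 h]
          exact hbridge i2 h (alpha_min A i2 h h2).1 i1 h1
        · rw [D_snd_ge A i1 h1, D_snd_ge A i2 h]
          exact cand_mono (subset_refl A) h12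
    · intro i hi
      rcases lt_or_ge i (jj n k R π A) with h | h
      · rw [hfe i h]
        exact ihmem i (by omega)
      · rw [D_snd_ge A i h]
        obtain ⟨hik, hR⟩ := alpha_min A i h hi
        exact ⟨hB _ hR, cand_sdiff hπtop A i⟩
    · intro h1 h2
      rcases lt_or_ge ((D n k R π A).1 - 1) (jj n k R π A) with h | h
      · have haj : (D n k R π A).1 = jj n k R π A := by omega
        rw [haj, hfe _ (by omega)]
        exact (ih5 hj (by omega)).trans (cand_mono hCA.subset le_rfl)
      · rw [D_snd_ge A _ h]
        exact cand_mono (subset_refl A) (by omega)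
  · have hj0 : jj n k R π A = 0 := by omega
    have hf : ∀ i : ℕ, (D n k R π A).2 i = embedLow n k A ∪ firstVals n k π i :=
      fun i => D_snd_ge A i (by omega)
    refine ⟨alpha_le A (by omega), ?_, ?_, ?_⟩
    · intro i1 i2 h12 h2
      rw [hf i1, hf i2]
      exact cand_mono (subset_refl A) h12
    · intro i hi
      rw [hf i]
      obtain ⟨hik, hR⟩ := alpha_min A i (by omega) hi
      exact ⟨hB _ hR, cand_sdiff hπtop A i⟩
    · intro h1 h2
      rw [hf _]
      exact cand_mono (subset_refl A) (by omega)

theorem alpha_mono (A A' : Finset (Fin n)) (h : A' ⊆ A) :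
    (D n k R π A').1 ≤ (D n k R π A).1 := by
  rcases h.ssubset_or_eq with h | rfl
  · exact (alpha_le_jj A A' h).trans (jj_le_alpha A)
  · exact le_rfl

theorem cand_ssubset (hπtop : ∀ j : Fin k, n ≤ ((π j) : ℕ))
    {A A' : Finset (Fin n)} {i i' : ℕ} (hA : A' ⊂ A) (hi : i' ≤ i) :
    embedLow n k A' ∪ firstVals n k π i' ⊂ embedLow n k A ∪ firstVals n k π i := by
  rw [Finset.ssubset_iff_of_subset (cand_mono hA.subset hi)]
  obtain ⟨x, hxA, hxA'⟩ := Finset.exists_of_ssubset hA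
  refine ⟨Fin.castLEEmb (Nat.le_add_right n k) x, Finset.mem_union_left _ ?_, ?_⟩
  · exact Finset.mem_map_of_mem _ hxA
  · intro hmem
    rcases Finset.mem_union.mp hmem with h | h
    · exact hxA' ((Finset.mem_map' _).mp h)
    · have h1 := mem_firstVals_ge hπtop h
      have h2 : ((Fin.castLEEmb (Nat.le_add_right n k) x : Fin (n + k)) : ℕ) < n := x.2
      omega

theorem cand_subset_rev (hπtop : ∀ j : Fin k, n ≤ ((π j) : ℕ))
    {A A' : Finset (Fin n)} {i i' : ℕ}
    (h : embedLow n k A' ∪ firstVals n k π i' ⊆ embedLow n k A ∪ firstVals n k π i) :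
    A' ⊆ A := by
  intro a ha
  have h1 : (Fin.castLEEmb (Nat.le_add_right n k) a : Fin (n + k)) ∈
      embedLow n k A ∪ firstVals n k π i :=
    h (Finset.mem_union_left _ (Finset.mem_map_of_mem _ ha))
  rcases Finset.mem_union.mp h1 with h2 | h2
  · exact (Finset.mem_map' _).mp h2
  · have h3 := mem_firstVals_ge hπtop h2
    have h4 : ((Fin.castLEEmb (Nat.le_add_right n k) a : Fin (n + k)) : ℕ) < n := a.2
    omega

/-- Claim 3 of the paper: given a partition of `Q_{n+k}` into `B` and `R` and a
permutation `π` of `[n+k] ∖ [n]`, there exist functions `φ : Q_n → R ∪ {⊥}`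
(modeled with `Option`, `none` being the failure symbol `⊥`), `α : Q_n → {0,…,k+1}`
and `f` assigning to each `A ∈ Q_n` a chain `f(A)_0 ⊆ … ⊆ f(A)_{α(A)-1}` of sets of
`B`, satisfying properties P1–P5. -/
theorem exists_embedding_functions (n k : ℕ)
    (B R : Set (Finset (Fin (n + k))))
    (hunion : B ∪ R = Set.univ) (hdisj : B ∩ R = ∅)
    (π : Fin k → Fin (n + k))
    (hπinj : Function.Injective π)
    (hπtop : ∀ j : Fin k, n ≤ ((π j) : ℕ)) :
    ∃ (φ : Finset (Fin n) → Option (Finset (Fin (n + k))))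
      (α : Finset (Fin n) → ℕ)
      (f : Finset (Fin n) → ℕ → Finset (Fin (n + k))),
      -- α takes values in {0, 1, …, k+1}
      (∀ A, α A ≤ k + 1) ∧
      -- φ maps into R ∪ {⊥}
      (∀ A S, φ A = some S → S ∈ R) ∧
      -- P1: if φ(A') ≠ ⊥ and φ(A) ≠ ⊥ then A' ⊊ A ↔ φ(A') ⊊ φ(A)
      (∀ A A' S S', φ A = some S → φ A' = some S' → (A' ⊂ A ↔ S' ⊂ S)) ∧
      -- P2: A' ⊆ A implies α(A') ≤ α(A)
      (∀ A A' : Finset (Fin n), A' ⊆ A → α A' ≤ α A) ∧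
      -- P3: α(A) = k+1 gives failure; otherwise φ(A) = A ∪ {π(n+1),…,π(n+α(A))}
      (∀ A, (α A = k + 1 → φ A = none) ∧
        (α A ≤ k → φ A = some (embedLow n k A ∪ firstVals n k π (α A)))) ∧
      -- P4: f(A) is a chain of length α(A) in B with
      --     f(A)_i ∖ [n] = {π(n+1),…,π(n+i)}
      (∀ A, (∀ i j : ℕ, i ≤ j → j < α A → f A i ⊆ f A j) ∧
        (∀ i : ℕ, i < α A →
          f A i ∈ B ∧ f A i \ lowPart n k = firstVals n k π i)) ∧
      -- P5: if 1 ≤ α(A) ≤ k then f(A)_{α(A)-1} ⊆ φ(A)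
      (∀ A S, 1 ≤ α A → α A ≤ k → φ A = some S → f A (α A - 1) ⊆ S) := by
  refine ⟨fun A => if (D n k R π A).1 ≤ k then
      some (embedLow n k A ∪ firstVals n k π (D n k R π A).1) else none,
    fun A => (D n k R π A).1, fun A => (D n k R π A).2, ?_, ?_, ?_, ?_, ?_, ?_, ?_⟩
  · exact fun A => (main_inv hunion hπtop A).1
  · intro A S h
    dsimp only at h
    by_cases hk : (D n k R π A).1 ≤ k
    · rw [if_pos hk] at h
      rw [← Option.some_inj.mp h]
      exact alpha_mem_R A hk
    · rw [if_neg hk] at h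
      exact absurd h (by simp)
  · intro A A' S S' h h'
    dsimp only at h h'
    by_cases hk : (D n k R π A).1 ≤ k
    · by_cases hk' : (D n k R π A').1 ≤ k
      · rw [if_pos hk] at h
        rw [if_pos hk'] at h'
        rw [← Option.some_inj.mp h, ← Option.some_inj.mp h']
        constructor
        · intro hss
          exact cand_ssubset hπtop hss (alpha_mono A A' hss.subset)
        · intro hss
          refine ⟨cand_subset_rev hπtop hss.subset, fun hsub => ?_⟩
          have heq : A = A' := subset_antisymm hsub (cand_subset_rev hπtop hss.subset)
          subst heq
          exact hss.ne rfl
      · rw [if_neg hk'] at h'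
        exact absurd h' (by simp)
    · rw [if_neg hk] at h
      exact absurd h (by simp)
  · exact alpha_mono
  · intro A
    dsimp only
    exact ⟨fun h => if_neg (by omega), fun h => if_pos h⟩
  · intro A
    exact ⟨(main_inv hunion hπtop A).2.1, (main_inv hunion hπtop A).2.2.1⟩
  · intro A S h1 h2 hφ
    dsimp only at h1 h2 hφ ⊢
    rw [if_pos h2] at hφ
    rw [← Option.some_inj.mp hφ]
    exact (main_inv hunion hπtop A).2.2.2 h1 h2
end

section
/- Let n, k ∈ ℕ with k ≥ 2, and let π₁ and π₂ be two distinct permutations of {n+1, …, n+k}. For j = 1, 2, let q^j_0 ⊆ q^j_1 ⊆ … ⊆ q^j_k be a chain of subsets of [n+k] satisfying q^j_i ∖ [n] = {π_j(n+1), π_j(n+2), …, π_j(n+i)} for all 0 ≤ i ≤ k. If q^1_0 = q^2_0 and q^1_k = q^2_k, then there exists an index i with 1 ≤ i ≤ k−1 such that q^1_i ⊄ q^2_i and q^2_i ⊄ q^1_i; consequently, the four sets q^1_0, q^1_i, q^2_i, q^1_k form an induced copy of Q_2 (ordered by inclusion). -/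
lemma mem_firstVals {n k : ℕ} {π : Fin k → Fin (n + k)} {i : ℕ} {x : Fin (n + k)} :
    x ∈ firstVals n k π i ↔ ∃ j : Fin k, (j : ℕ) < i ∧ π j = x := by
  simp [firstVals]

lemma fin2_cases : ∀ A : Finset (Fin 2),
    A = ∅ ∨ A = {0} ∨ A = {1} ∨ A = {0, 1} := by decide

/-- Two chains `q¹_0 ⊆ … ⊆ q¹_k` and `q²_0 ⊆ … ⊆ q²_k` in `Q_{n+k}` associated
with two distinct permutations `π₁, π₂` of `[n+k] ∖ [n]` (so that
`qʲ_i ∖ [n] = {π_j(n+1),…,π_j(n+i)}`), having the same bottom and top elements,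
contain incomparable middle sets `q¹_i`, `q²_i`, and the four sets
`q¹_0, q¹_i, q²_i, q¹_k` form an induced copy of `Q_2`. -/
theorem distinct_perm_chains_give_Q2 (n k : ℕ) (hk : 2 ≤ k)
    (π₁ π₂ : Fin k → Fin (n + k))
    (hπ₁inj : Function.Injective π₁) (hπ₂inj : Function.Injective π₂)
    (hπ₁top : ∀ j : Fin k, n ≤ ((π₁ j) : ℕ)) (hπ₂top : ∀ j : Fin k, n ≤ ((π₂ j) : ℕ))
    (hne : π₁ ≠ π₂)
    (q₁ q₂ : ℕ → Finset (Fin (n + k)))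
    (hq₁chain : ∀ i j : ℕ, i ≤ j → j ≤ k → q₁ i ⊆ q₁ j)
    (hq₂chain : ∀ i j : ℕ, i ≤ j → j ≤ k → q₂ i ⊆ q₂ j)
    (hq₁ : ∀ i : ℕ, i ≤ k → q₁ i \ lowPart n k = firstVals n k π₁ i)
    (hq₂ : ∀ i : ℕ, i ≤ k → q₂ i \ lowPart n k = firstVals n k π₂ i)
    (hbot : q₁ 0 = q₂ 0) (htop : q₁ k = q₂ k) :
    ∃ i : ℕ, 1 ≤ i ∧ i ≤ k - 1 ∧
      ¬ q₁ i ⊆ q₂ i ∧ ¬ q₂ i ⊆ q₁ i ∧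
      ContainsInducedCopy 2 (n + k) {q₁ 0, q₁ i, q₂ i, q₁ k} := by
  classical
  -- the first index where the permutations differ
  have hPex : ∃ m : ℕ, ∃ hm : m < k, π₁ ⟨m, hm⟩ ≠ π₂ ⟨m, hm⟩ := by
    obtain ⟨j, hj⟩ := Function.ne_iff.mp hne
    exact ⟨j.val, j.isLt, by simpa using hj⟩
  set i₀ := Nat.find hPex with hi₀def
  obtain ⟨hi₀k, hi₀ne⟩ := Nat.find_spec hPex
  have hmin : ∀ m (hm : m < k), m < i₀ → π₁ ⟨m, hm⟩ = π₂ ⟨m, hm⟩ := by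
    intro m hm hmlt
    by_contra h
    exact Nat.find_min hPex hmlt ⟨hm, h⟩
  set I₀ : Fin k := ⟨i₀, hi₀k⟩ with hI₀
  -- the full images agree
  have hfv : firstVals n k π₁ k = firstVals n k π₂ k := by
    rw [← hq₁ k le_rfl, ← hq₂ k le_rfl, htop]
  -- i₀ < k - 1
  have hi₀lt : i₀ < k - 1 := by
    by_contra h
    push_neg at h
    have hmem : π₂ I₀ ∈ firstVals n k π₁ k := by
      rw [hfv]; exact mem_firstVals.mpr ⟨I₀, I₀.isLt, rfl⟩
    obtain ⟨j, hjk, hje⟩ := mem_firstVals.mp hmem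
    rcases eq_or_ne j I₀ with hj | hj
    · exact hi₀ne (by rw [hj] at hje; exact hje)
    · have hjlt : (j : ℕ) < i₀ := by
        have : (j : ℕ) ≠ i₀ := fun h' => hj (Fin.ext h')
        omega
      have h1 : π₁ j = π₂ j := by
        have := hmin j.val j.isLt hjlt
        simpa [Fin.eta] using this
      have : π₂ j = π₂ I₀ := by rw [← h1, hje]
      exact hj (hπ₂inj this)
  have hik : i₀ + 1 ≤ k := hi₀k
  have hnotlow₁ : π₁ I₀ ∉ lowPart n k := by
    simp only [lowPart, Finset.mem_filter, Finset.mem_univ, true_and, not_lt]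
    exact hπ₁top I₀
  have hnotlow₂ : π₂ I₀ ∉ lowPart n k := by
    simp only [lowPart, Finset.mem_filter, Finset.mem_univ, true_and, not_lt]
    exact hπ₂top I₀
  -- π₁ I₀ ∈ q₁ (i₀+1)
  have hmem₁ : π₁ I₀ ∈ q₁ (i₀ + 1) := by
    have : π₁ I₀ ∈ q₁ (i₀ + 1) \ lowPart n k := by
      rw [hq₁ _ hik]
      exact mem_firstVals.mpr ⟨I₀, Nat.lt_succ_self i₀, rfl⟩
    exact (Finset.mem_sdiff.mp this).1
  have hmem₂ : π₂ I₀ ∈ q₂ (i₀ + 1) := by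
    have : π₂ I₀ ∈ q₂ (i₀ + 1) \ lowPart n k := by
      rw [hq₂ _ hik]
      exact mem_firstVals.mpr ⟨I₀, Nat.lt_succ_self i₀, rfl⟩
    exact (Finset.mem_sdiff.mp this).1
  -- π₁ I₀ ∉ q₂ (i₀+1)
  have hnmem₁ : π₁ I₀ ∉ q₂ (i₀ + 1) := by
    intro hmem
    have : π₁ I₀ ∈ firstVals n k π₂ (i₀ + 1) := by
      rw [← hq₂ _ hik]; exact Finset.mem_sdiff.mpr ⟨hmem, hnotlow₁⟩
    obtain ⟨j, hjlt, hje⟩ := mem_firstVals.mp this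
    rcases Nat.lt_or_ge j.val i₀ with hj | hj
    · have h1 : π₁ j = π₂ j := by simpa [Fin.eta] using hmin j.val j.isLt hj
      have : π₁ j = π₁ I₀ := by rw [h1, hje]
      have hji : j = I₀ := hπ₁inj this
      rw [hji] at hj
      exact lt_irrefl i₀ hj
    · have : j = I₀ := Fin.ext (show (j : ℕ) = i₀ by omega)
      rw [this] at hje
      exact hi₀ne hje.symm
  have hnmem₂ : π₂ I₀ ∉ q₁ (i₀ + 1) := by
    intro hmem
    have : π₂ I₀ ∈ firstVals n k π₁ (i₀ + 1) := by
      rw [← hq₁ _ hik]; exact Finset.mem_sdiff.mpr ⟨hmem, hnotlow₂⟩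
    obtain ⟨j, hjlt, hje⟩ := mem_firstVals.mp this
    rcases Nat.lt_or_ge j.val i₀ with hj | hj
    · have h1 : π₁ j = π₂ j := by simpa [Fin.eta] using hmin j.val j.isLt hj
      have : π₂ j = π₂ I₀ := by rw [← h1, hje]
      have hji : j = I₀ := hπ₂inj this
      rw [hji] at hj
      exact lt_irrefl i₀ hj
    · have : j = I₀ := Fin.ext (show (j : ℕ) = i₀ by omega)
      rw [this] at hje
      exact hi₀ne hje
  set i := i₀ + 1 with hidef
  have hns₁ : ¬ q₁ i ⊆ q₂ i := fun h => hnmem₁ (h hmem₁)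
  have hns₂ : ¬ q₂ i ⊆ q₁ i := fun h => hnmem₂ (h hmem₂)
  have h0i1 : q₁ 0 ⊆ q₁ i := hq₁chain 0 i (Nat.zero_le _) hik
  have h0i2 : q₁ 0 ⊆ q₂ i := hbot ▸ hq₂chain 0 i (Nat.zero_le _) hik
  have hi1k : q₁ i ⊆ q₁ k := hq₁chain i k hik le_rfl
  have hi2k : q₂ i ⊆ q₁ k := htop ▸ hq₂chain i k hik le_rfl
  have hN1 : ¬ q₁ i ⊆ q₁ 0 := fun h => hns₁ (h.trans h0i2)
  have hN2 : ¬ q₂ i ⊆ q₁ 0 := fun h => hns₂ (h.trans h0i1)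
  have hN3 : ¬ q₁ k ⊆ q₁ i := fun h => hns₂ (hi2k.trans h)
  have hN4 : ¬ q₁ k ⊆ q₂ i := fun h => hns₁ (hi1k.trans h)
  have hN5 : ¬ q₁ k ⊆ q₁ 0 := fun h => hns₁ (hi1k.trans (h.trans h0i2))
  refine ⟨i, by omega, by omega, hns₁, hns₂, ?_⟩
  set φ : Finset (Fin 2) → Finset (Fin (n + k)) := fun A =>
    if A = ∅ then q₁ 0 else if A = {0} then q₁ i else if A = {1} then q₂ i else q₁ k
    with hφ
  have e0 : φ ∅ = q₁ 0 := by simp [hφ]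
  have e1 : φ {0} = q₁ i := by
    simp only [hφ]
    split_ifs with h h h <;> first | rfl | exact absurd h (by decide) | exact absurd rfl h
  have e2 : φ {1} = q₂ i := by
    simp only [hφ]
    split_ifs with h h h <;> first | rfl | exact absurd h (by decide) | exact absurd rfl h
  have e3 : φ {0, 1} = q₁ k := by
    simp only [hφ]
    split_ifs with h h h <;> first | rfl | exact absurd h (by decide) | exact absurd rfl h
  refine ⟨φ, ?_, ?_, ?_⟩
  · intro A B h
    rcases fin2_cases A with hA | hA | hA | hA <;> rcases fin2_cases B with hB | hB | hB | hB <;>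
      subst hA <;> subst hB <;> simp only [e0, e1, e2, e3] at h <;>
      first
      | rfl
      | exact (hN1 (le_of_eq h)).elim
      | exact (hN1 (le_of_eq h.symm)).elim
      | exact (hN2 (le_of_eq h)).elim
      | exact (hN2 (le_of_eq h.symm)).elim
      | exact (hN3 (le_of_eq h)).elim
      | exact (hN3 (le_of_eq h.symm)).elim
      | exact (hN4 (le_of_eq h)).elim
      | exact (hN4 (le_of_eq h.symm)).elim
      | exact (hN5 (le_of_eq h)).elim
      | exact (hN5 (le_of_eq h.symm)).elim
      | exact (hns₁ (le_of_eq h)).elim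
      | exact (hns₁ (le_of_eq h.symm)).elim
  · intro A
    rcases fin2_cases A with hA | hA | hA | hA <;> subst hA <;>
      simp only [e0, e1, e2, e3] <;> simp
  · intro A B
    rcases fin2_cases A with hA | hA | hA | hA <;> rcases fin2_cases B with hB | hB | hB | hB <;>
      subst hA <;> subst hB <;> simp only [e0, e1, e2, e3] <;>
      first
      | exact iff_of_true (by decide) (Finset.Subset.refl _)
      | exact iff_of_true (by decide) h0i1
      | exact iff_of_true (by decide) h0i2
      | exact iff_of_true (by decide) (h0i1.trans hi1k)
      | exact iff_of_true (by decide) hi1k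
      | exact iff_of_true (by decide) hi2k
      | exact iff_of_false (by decide) hns₁
      | exact iff_of_false (by decide) hns₂
      | exact iff_of_false (by decide) hN1
      | exact iff_of_false (by decide) hN2
      | exact iff_of_false (by decide) hN3
      | exact iff_of_false (by decide) hN4
      | exact iff_of_false (by decide) hN5
end

section
/- Let N, k ∈ ℕ with N > 3 and k ≥ √(8N − 15). Then there exists a family C of (k+1)-element subsets of [N] such that the symmetric difference of any two distinct members of C has size at least 4, and the following holds: for all n, m ∈ ℕ with n + m = N and k ≤ n − √(8N − 15), for every m-element set Y ⊆ [N] and every y ∈ Y, there is a k-element set C ⊆ [N]∖Y such that C ∪ {y} ∈ C. -/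
open Finset BigOperators Polynomial

namespace CWC

variable {F : Type} [Field F] [DecidableEq F]

lemma basis_coeff_top (S : Finset F) (z : F) (hz : z ∈ S) :
    (Lagrange.basis S id z).coeff (S.card - 1) = (∏ b ∈ S.erase z, (z - b))⁻¹ := by
  classical
  have hcard : (S.erase z).card = S.card - 1 := Finset.card_erase_of_mem hz
  have hsplit : Lagrange.basis S id z
      = C (∏ b ∈ S.erase z, (z - b)⁻¹) * ∏ b ∈ S.erase z, (X - C b) := by
    unfold Lagrange.basis Lagrange.basisDivisor
    rw [Finset.prod_mul_distrib, map_prod]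
    rfl
  have hmonic : (∏ b ∈ S.erase z, (X - C b)).Monic :=
    monic_prod_of_monic _ _ (fun b _ => monic_X_sub_C b)
  have hdeg : (∏ b ∈ S.erase z, (X - C b)).natDegree = S.card - 1 := by
    rw [natDegree_prod_of_monic _ _ (fun b _ => monic_X_sub_C b)]
    simp [hcard]
  rw [hsplit, Polynomial.coeff_C_mul, ← hdeg, hmonic.coeff_natDegree, mul_one,
    ← Finset.prod_inv_distrib]

lemma lagrange_weight_sum (S : Finset F) (hS : S.Nonempty) (d : ℕ) (hd : d ≤ S.card - 1) :
    ∑ z ∈ S, z ^ d * (∏ b ∈ S.erase z, (z - b))⁻¹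
      = if d = S.card - 1 then 1 else 0 := by
  classical
  have hSc : 0 < S.card := Finset.card_pos.2 hS
  have hdeg : (X ^ d : F[X]).degree < S.card := by
    refine lt_of_le_of_lt (degree_X_pow_le d) ?_
    exact_mod_cast Nat.lt_of_le_of_lt (Nat.le_of_eq rfl) (by omega : d < S.card)
  have hinj : Set.InjOn (id : F → F) S := Function.injective_id.injOn
  have h := Lagrange.eq_interpolate (f := (X ^ d : F[X])) hinj hdeg
  have h2 := congrArg (fun q : F[X] => q.coeff (S.card - 1)) h
  simp only [Lagrange.interpolate_apply] at h2
  rw [Polynomial.coeff_X_pow] at h2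
  rw [Polynomial.finset_sum_coeff] at h2
  have h3 : ∀ z ∈ S, (C (eval (id z) (X ^ d)) * Lagrange.basis S id z).coeff (S.card - 1)
      = z ^ d * (∏ b ∈ S.erase z, (z - b))⁻¹ := by
    intro z hz
    rw [Polynomial.coeff_C_mul, basis_coeff_top S z hz]
    simp
  rw [Finset.sum_congr rfl h3] at h2
  rw [← h2]
  by_cases hcase : d = S.card - 1 <;> simp [hcase, eq_comm]

/-! ### The grid-sum coefficient formula -/

lemma exists_lt_of_sum_le {k : ℕ} {d m : Fin k → ℕ} (hsum : ∑ i, d i ≤ ∑ i, m i)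
    (hne : d ≠ m) : ∃ j, d j < m j := by
  by_contra h
  push_neg at h
  have hge : ∀ j, m j ≤ d j := h
  have : ∑ i, m i ≤ ∑ i, d i := Finset.sum_le_sum fun i _ => hge i
  have heq : ∑ i, d i = ∑ i, m i := le_antisymm hsum this
  apply hne
  funext j
  by_contra hj
  have hlt : m j < d j := lt_of_le_of_ne (hge j) (Ne.symm hj)
  have : ∑ i, m i < ∑ i, d i :=
    Finset.sum_lt_sum (fun i _ => hge i) ⟨j, Finset.mem_univ j, hlt⟩
  omega


lemma grid_sum_eq_coeff {k : ℕ} (S : Fin k → Finset F) (hS : ∀ i, (S i).Nonempty)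
    (f : MvPolynomial (Fin k) F)
    (hdeg : f.totalDegree ≤ ∑ i, ((S i).card - 1)) :
    ∑ z ∈ Fintype.piFinset S,
        (MvPolynomial.eval z f) * ∏ i, (∏ b ∈ (S i).erase (z i), (z i - b))⁻¹
      = MvPolynomial.coeff (Finsupp.equivFunOnFinite.symm (fun i => (S i).card - 1)) f := by
  classical
  set m : Fin k → ℕ := fun i => (S i).card - 1 with hm
  set mf : Fin k →₀ ℕ := Finsupp.equivFunOnFinite.symm m with hmf
  have key : ∀ d : Fin k →₀ ℕ, (∑ i, d i) ≤ (∑ i, m i) →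
      ∑ z ∈ Fintype.piFinset S,
          (∏ i, (z i) ^ (d i)) * ∏ i, (∏ b ∈ (S i).erase (z i), (z i - b))⁻¹
        = if d = mf then 1 else 0 := by
    intro d hd
    have hsplit : ∀ z : Fin k → F,
        (∏ i, (z i) ^ (d i)) * ∏ i, (∏ b ∈ (S i).erase (z i), (z i - b))⁻¹
        = ∏ i, ((z i) ^ (d i) * (∏ b ∈ (S i).erase (z i), (z i - b))⁻¹) := by
      intro z; rw [← Finset.prod_mul_distrib]
    simp_rw [hsplit]
    rw [← Finset.prod_univ_sum S (fun i t => t ^ d i * (∏ b ∈ (S i).erase t, (t - b))⁻¹)]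
    by_cases hdm : (fun i => d i) = m
    · have hone : ∀ i, ∑ t ∈ S i, t ^ (d i) * (∏ b ∈ (S i).erase t, (t - b))⁻¹ = 1 := by
        intro i
        rw [lagrange_weight_sum (S i) (hS i) (d i) ((congrFun hdm i).le)]
        rw [if_pos]; exact congrFun hdm i
      rw [Finset.prod_congr rfl (fun i _ => hone i), Finset.prod_const_one, if_pos]
      rw [hmf]
      rw [← hdm]
      ext i
      simp
    · obtain ⟨j, hj⟩ := exists_lt_of_sum_le (d := fun i => d i) (m := m) hd hdm
      have hnef : ¬(d = mf) := by
        intro hcon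
        have hdj : d j = m j := by rw [hcon]; rfl
        omega
      rw [Finset.prod_eq_zero (Finset.mem_univ j)]
      · rw [if_neg hnef]
      · rw [lagrange_weight_sum (S j) (hS j) (d j) (le_of_lt hj), if_neg (by have hmj : m j = #(S j) - 1 := rfl; omega)]
  have expand : ∀ z : Fin k → F, MvPolynomial.eval z f
      = ∑ d ∈ f.support, MvPolynomial.coeff d f * ∏ i, (z i) ^ (d i) := by
    intro z
    conv_lhs => rw [← MvPolynomial.support_sum_monomial_coeff f]
    rw [map_sum]
    refine Finset.sum_congr rfl fun d hd => ?_
    rw [MvPolynomial.eval_monomial]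
    congr 1
    exact Finsupp.prod_fintype _ _ (fun i => pow_zero _)
  calc ∑ z ∈ Fintype.piFinset S,
        (MvPolynomial.eval z f) * ∏ i, (∏ b ∈ (S i).erase (z i), (z i - b))⁻¹
      = ∑ z ∈ Fintype.piFinset S, ∑ d ∈ f.support,
          MvPolynomial.coeff d f *
            ((∏ i, (z i) ^ (d i)) * ∏ i, (∏ b ∈ (S i).erase (z i), (z i - b))⁻¹) := by
        refine Finset.sum_congr rfl fun z _ => ?_
        rw [expand z, Finset.sum_mul]
        exact Finset.sum_congr rfl fun d _ => by ring
    _ = ∑ d ∈ f.support, MvPolynomial.coeff d f *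
          ∑ z ∈ Fintype.piFinset S,
            (∏ i, (z i) ^ (d i)) * ∏ i, (∏ b ∈ (S i).erase (z i), (z i - b))⁻¹ := by
        rw [Finset.sum_comm]
        exact Finset.sum_congr rfl fun d _ => by rw [Finset.mul_sum]
    _ = ∑ d ∈ f.support, MvPolynomial.coeff d f * (if d = mf then 1 else 0) := by
        refine Finset.sum_congr rfl fun d hd => ?_
        congr 1
        refine key d ?_
        have h1 : (d.sum fun _ e => e) ≤ f.totalDegree := MvPolynomial.le_totalDegree hd
        have h2 : (d.sum fun _ e => e) = ∑ i, d i :=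
          Finsupp.sum_fintype _ _ (fun i => rfl)
        have h3 : Finset.univ.sum m = ∑ i, m i := rfl
        omega
    _ = MvPolynomial.coeff mf f := by
        simp_rw [mul_ite, mul_one, mul_zero]
        rw [Finset.sum_ite_eq' f.support mf (fun d => MvPolynomial.coeff d f)]
        by_cases hmem : mf ∈ f.support
        · rw [if_pos hmem]
        · rw [if_neg hmem, eq_comm, ← MvPolynomial.notMem_support_iff]
          exact hmem

lemma prod_X_pow_eq_monomial' {k : ℕ} (c : Fin k → ℕ) :
    (∏ i, (MvPolynomial.X i : MvPolynomial (Fin k) F) ^ c i)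
      = MvPolynomial.monomial (Finsupp.equivFunOnFinite.symm c) 1 := by
  classical
  rw [MvPolynomial.monomial_eq, map_one, one_mul]
  rw [Finsupp.prod_fintype]
  · rfl
  · intro i; exact pow_zero _

lemma coeff_sum_X_pow {k : ℕ} (M : ℕ) (d : Fin k →₀ ℕ) :
    MvPolynomial.coeff d ((∑ i, (MvPolynomial.X i : MvPolynomial (Fin k) F)) ^ M)
      = if (∑ i, d i) = M then (Nat.multinomial Finset.univ d : F) else 0 := by
  classical
  rw [Finset.sum_pow_eq_sum_piAntidiag]
  rw [MvPolynomial.coeff_sum]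
  have term : ∀ c ∈ Finset.piAntidiag Finset.univ M,
      MvPolynomial.coeff d
        ((Nat.multinomial Finset.univ c : MvPolynomial (Fin k) F) *
          ∏ i, MvPolynomial.X i ^ c i)
      = if c = (fun i => d i) then (Nat.multinomial Finset.univ c : F) else 0 := by
    intro c _
    rw [prod_X_pow_eq_monomial']
    rw [← map_natCast (MvPolynomial.C : F →+* MvPolynomial (Fin k) F)]
    rw [MvPolynomial.coeff_C_mul, MvPolynomial.coeff_monomial]
    by_cases hcd : c = (fun i => d i)
    · have hfe : Finsupp.equivFunOnFinite.symm c = d := by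
        rw [hcd]
        exact Finsupp.equivFunOnFinite.symm_apply_apply d
      rw [if_pos hfe, if_pos hcd, mul_one]
    · have hfe : Finsupp.equivFunOnFinite.symm c ≠ d := by
        intro hcon
        apply hcd
        have h2 := congrArg (⇑Finsupp.equivFunOnFinite) hcon
        rwa [Equiv.apply_symm_apply] at h2
      rw [if_neg hfe, if_neg hcd, mul_zero]
  rw [Finset.sum_congr rfl term]
  rw [Finset.sum_ite_eq' (Finset.piAntidiag Finset.univ M) (fun i => d i)
    (fun c => (Nat.multinomial Finset.univ c : F))]
  have hmem : ((fun i => d i) ∈ Finset.piAntidiag Finset.univ M) ↔ (∑ i, d i) = M := by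
    rw [Finset.mem_piAntidiag]
    constructor
    · rintro ⟨h1, -⟩; exact h1
    · intro h1; exact ⟨h1, fun i _ => Finset.mem_univ i⟩
  by_cases hc : (∑ i, d i) = M
  · rw [if_pos (hmem.2 hc), if_pos hc]
  · rw [if_neg (fun hx => hc (hmem.1 hx)), if_neg hc]

/-- The integer that will be the corner coefficient. -/
def cInt (k : ℕ) (m : Fin k → ℕ) : ℤ :=
  ∑ σ : Equiv.Perm (Fin k), (Equiv.Perm.sign σ : ℤ) *
    (if ∀ j, ((σ⁻¹ j : Fin k) : ℕ) ≤ m j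
      then (Nat.multinomial Finset.univ (fun j => m j - ((σ⁻¹ j : Fin k) : ℕ)) : ℤ) else 0)

/-- The Vandermonde polynomial in `MvPolynomial`. -/
noncomputable def vmd (k : ℕ) (F : Type) [Field F] : MvPolynomial (Fin k) F :=
  ∏ i, ∏ j ∈ Finset.Ioi i, (MvPolynomial.X j - MvPolynomial.X i)

omit [DecidableEq F] in
lemma vmd_eq_sum (k : ℕ) : (vmd k F) =
    ∑ σ : Equiv.Perm (Fin k), (Equiv.Perm.sign σ : ℤ) •
      MvPolynomial.monomial
        (Finsupp.equivFunOnFinite.symm (fun j => ((σ⁻¹ j : Fin k) : ℕ))) (1 : F) := by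
  classical
  have h1 : vmd k F = (Matrix.vandermonde (fun i => (MvPolynomial.X i : MvPolynomial (Fin k) F))).det := by
    rw [Matrix.det_vandermonde]; rfl
  rw [h1, Matrix.det_apply]
  refine Finset.sum_congr rfl fun σ _ => ?_
  congr 1
  have h2 : ∀ i : Fin k, Matrix.vandermonde (fun i => (MvPolynomial.X i : MvPolynomial (Fin k) F)) (σ i) i
      = (fun j => (MvPolynomial.X j : MvPolynomial (Fin k) F) ^ ((σ⁻¹ j : Fin k) : ℕ)) (σ i) := by
    intro i
    simp [Matrix.vandermonde_apply]
  rw [Finset.prod_congr rfl (fun i _ => h2 i)]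
  rw [Equiv.prod_comp σ (fun j => (MvPolynomial.X j : MvPolynomial (Fin k) F) ^ ((σ⁻¹ j : Fin k) : ℕ))]
  rw [prod_X_pow_eq_monomial']

omit [DecidableEq F] in
lemma coeff_pow_mul_vmd {k M : ℕ} (m : Fin k → ℕ)
    (hsum : ∑ i, m i = M + ∑ i : Fin k, (i : ℕ)) :
    MvPolynomial.coeff (Finsupp.equivFunOnFinite.symm m)
        ((∑ i, (MvPolynomial.X i : MvPolynomial (Fin k) F)) ^ M * vmd k F)
      = ((cInt k m : ℤ) : F) := by
  classical
  rw [vmd_eq_sum, Finset.mul_sum, MvPolynomial.coeff_sum]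
  rw [cInt, Int.cast_sum]
  refine Finset.sum_congr rfl fun σ _ => ?_
  rw [mul_smul_comm, MvPolynomial.coeff_smul, MvPolynomial.coeff_mul_monomial']
  set u : Fin k → ℕ := fun j => ((σ⁻¹ j : Fin k) : ℕ) with hu
  have husum : ∑ j, u j = ∑ i : Fin k, (i : ℕ) :=
    Equiv.sum_comp σ⁻¹ (fun j => (j : ℕ))
  by_cases hle : ∀ j, u j ≤ m j
  · have hle' : Finsupp.equivFunOnFinite.symm u ≤ Finsupp.equivFunOnFinite.symm m := by
      rw [Finsupp.le_def]; intro j; exact hle j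
    rw [if_pos hle', if_pos hle, mul_one]
    rw [coeff_sum_X_pow]
    have hsub : ∀ j, (Finsupp.equivFunOnFinite.symm m - Finsupp.equivFunOnFinite.symm u) j
        = m j - u j := fun j => by
      rw [Finsupp.tsub_apply]; rfl
    have hsum2 : (∑ i, (Finsupp.equivFunOnFinite.symm m - Finsupp.equivFunOnFinite.symm u) i) = M := by
      rw [Finset.sum_congr rfl (fun i _ => hsub i)]
      have h4 : ∑ j, (m j - u j) + ∑ j, u j = ∑ j, m j := by
        rw [← Finset.sum_add_distrib]
        exact Finset.sum_congr rfl fun j _ => Nat.sub_add_cancel (hle j)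
      omega
    rw [if_pos hsum2]
    have harg : ⇑(Finsupp.equivFunOnFinite.symm m - Finsupp.equivFunOnFinite.symm u)
        = fun j => m j - u j := funext hsub
    rw [harg]
    push_cast
    rw [zsmul_eq_mul]
  · have hle' : ¬(Finsupp.equivFunOnFinite.symm u ≤ Finsupp.equivFunOnFinite.symm m) := by
      rw [Finsupp.le_def]
      push_neg
      push_neg at hle
      obtain ⟨j, hj⟩ := hle
      refine ⟨j, ?_⟩
      have h1 : (Finsupp.equivFunOnFinite.symm u) j = u j := rfl
      have h2 : (Finsupp.equivFunOnFinite.symm m) j = m j := rfl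
      omega
    rw [if_neg hle', if_neg hle, smul_zero, mul_zero, Int.cast_zero]

/-- The determinant identity over the integers. -/
lemma cInt_mul_factorials {k M : ℕ} (m : Fin k → ℕ)
    (hsum : ∑ i, m i = M + ∑ i : Fin k, (i : ℕ)) :
    cInt k m * (∏ i, ((m i).factorial : ℤ))
      = (M.factorial : ℤ) * ∏ i, ∏ j ∈ Finset.Ioi i, ((m j : ℤ) - (m i : ℤ)) := by
  classical
  have hterm : ∀ σ : Equiv.Perm (Fin k),
      (if ∀ j, ((σ⁻¹ j : Fin k) : ℕ) ≤ m j
        then (Nat.multinomial Finset.univ (fun j => m j - ((σ⁻¹ j : Fin k) : ℕ)) : ℤ) else 0)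
        * (∏ i, ((m i).factorial : ℤ))
      = (M.factorial : ℤ) * ∏ j, ((m j).descFactorial ((σ⁻¹ j : Fin k) : ℕ) : ℤ) := by
    intro σ
    set u : Fin k → ℕ := fun j => ((σ⁻¹ j : Fin k) : ℕ) with hu
    by_cases hle : ∀ j, u j ≤ m j
    · rw [if_pos hle]
      have key : (Nat.multinomial Finset.univ (fun j => m j - u j))
          * (∏ i, (m i).factorial)
          = M.factorial * ∏ j, (m j).descFactorial (u j) := by
        have hfact : ∀ j, (m j).factorial = (m j - u j).factorial * (m j).descFactorial (u j) :=
          fun j => (Nat.factorial_mul_descFactorial (hle j)).symm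
        rw [Finset.prod_congr rfl (fun j _ => hfact j), Finset.prod_mul_distrib, ← mul_assoc]
        have hspec := Nat.multinomial_spec Finset.univ (fun j => m j - u j)
        rw [mul_comm (Nat.multinomial Finset.univ fun j => m j - u j) _, hspec]
        congr 2
        have h4 : ∑ j, (m j - u j) + ∑ j, u j = ∑ j, m j := by
          rw [← Finset.sum_add_distrib]
          exact Finset.sum_congr rfl fun j _ => Nat.sub_add_cancel (hle j)
        have husum : ∑ j, u j = ∑ i : Fin k, (i : ℕ) :=
          Equiv.sum_comp σ⁻¹ (fun j => (j : ℕ))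
        omega
      exact_mod_cast congrArg (fun x : ℕ => (x : ℤ)) key
    · rw [if_neg hle, zero_mul]
      push_neg at hle
      obtain ⟨j, hj⟩ := hle
      have : (m j).descFactorial (u j) = 0 := Nat.descFactorial_of_lt hj
      rw [Finset.prod_eq_zero (Finset.mem_univ j) (by exact_mod_cast congrArg (fun x : ℕ => (x:ℤ)) this), mul_zero]
  rw [cInt, Finset.sum_mul]
  have hstep : ∑ σ : Equiv.Perm (Fin k), (Equiv.Perm.sign σ : ℤ) *
        (if ∀ j, ((σ⁻¹ j : Fin k) : ℕ) ≤ m j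
          then (Nat.multinomial Finset.univ (fun j => m j - ((σ⁻¹ j : Fin k) : ℕ)) : ℤ) else 0)
        * (∏ i, ((m i).factorial : ℤ))
      = (M.factorial : ℤ) * ∑ σ : Equiv.Perm (Fin k), (Equiv.Perm.sign σ : ℤ) *
          ∏ j, ((m j).descFactorial ((σ⁻¹ j : Fin k) : ℕ) : ℤ) := by
    rw [Finset.mul_sum]
    refine Finset.sum_congr rfl fun σ _ => ?_
    rw [mul_assoc, hterm σ]
    ring
  rw [hstep]
  congr 1
  -- reindex by inversion and recognize a determinant
  have hinv : ∑ σ : Equiv.Perm (Fin k), (Equiv.Perm.sign σ : ℤ) *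
        ∏ j, ((m j).descFactorial ((σ⁻¹ j : Fin k) : ℕ) : ℤ)
      = ∑ σ : Equiv.Perm (Fin k), (Equiv.Perm.sign σ : ℤ) *
        ∏ j, ((m j).descFactorial ((σ j : Fin k) : ℕ) : ℤ) := by
    apply Fintype.sum_bijective (fun σ : Equiv.Perm (Fin k) => σ⁻¹)
    · exact (Equiv.inv (Equiv.Perm (Fin k))).bijective
    · intro σ
      rw [Equiv.Perm.sign_inv]
  rw [hinv]
  have hdet : ∑ σ : Equiv.Perm (Fin k), (Equiv.Perm.sign σ : ℤ) *
        ∏ j, ((m j).descFactorial ((σ j : Fin k) : ℕ) : ℤ)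
      = (Matrix.of fun i j : Fin k => ((m j).descFactorial ((i : Fin k) : ℕ) : ℤ)).det := by
    rw [Matrix.det_apply]
    refine Finset.sum_congr rfl fun σ _ => ?_
    rw [Units.smul_def, zsmul_eq_mul]
    rfl
  rw [hdet]
  have htrans : (Matrix.of fun i j : Fin k => ((m j).descFactorial ((i : Fin k) : ℕ) : ℤ)).det
      = (Matrix.of fun i j : Fin k => ((m i).descFactorial ((j : Fin k) : ℕ) : ℤ)).det := by
    rw [← Matrix.det_transpose]
    rfl
  rw [htrans]
  have hB : (Matrix.vandermonde (fun i : Fin k => (m i : ℤ))).det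
      = (Matrix.of fun i j : Fin k => ((m i).descFactorial ((j : Fin k) : ℕ) : ℤ)).det := by
    rw [Matrix.det_eval_matrixOfPolynomials_eq_det_vandermonde (fun i : Fin k => ((m i : ℤ)))
      (fun j => descPochhammer ℤ (j : ℕ)) (fun j => descPochhammer_natDegree ℤ (j : ℕ))
      (fun j => monic_descPochhammer ℤ _)]
    congr 1
    funext i j
    simp only [Matrix.of_apply]
    rw [descPochhammer_eval_eq_descFactorial]
  rw [← hB, Matrix.det_vandermonde]


lemma cInt_not_dvd {p k : ℕ} (hp : p.Prime) (m : Fin k → ℕ) (hmono : StrictMono m)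
    (hmlt : ∀ i, m i < p)
    (hsum : ∑ i, m i = (p - 1) + ∑ i : Fin k, (i : ℕ)) :
    ¬ ((p : ℤ) ∣ cInt k m) := by
  intro hdvd
  have hpI : Prime (p : ℤ) := Nat.prime_iff_prime_int.mp hp
  have hdvd2 : (p : ℤ) ∣ cInt k m * ∏ i, ((m i).factorial : ℤ) := hdvd.mul_right _
  rw [cInt_mul_factorials m hsum] at hdvd2
  rcases hpI.dvd_mul.1 hdvd2 with h | h
  · rw [Int.natCast_dvd_natCast] at h
    have := (Nat.Prime.dvd_factorial hp).1 h
    have hp2 := hp.two_le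
    omega
  · rw [Prime.dvd_finset_prod_iff hpI] at h
    obtain ⟨i, -, hi⟩ := h
    rw [Prime.dvd_finset_prod_iff hpI] at hi
    obtain ⟨j, hj, hij⟩ := hi
    rw [Finset.mem_Ioi] at hj
    have h1 : (0 : ℤ) < (m j : ℤ) - (m i : ℤ) := by
      have := hmono hj
      omega
    have h2 : (m j : ℤ) - (m i : ℤ) < p := by
      have := hmlt j
      omega
    have := Int.le_of_dvd h1 hij
    omega

lemma sum_min_D (D : ℕ) : ∀ (K R : ℕ), R ≤ K * D →
    ∑ j ∈ Finset.range K, min D (R - j * D) = R := by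
  intro K
  induction K with
  | zero => intro R h; simp at h ⊢; omega
  | succ K ih =>
    intro R h
    rw [Finset.sum_range_succ]
    by_cases hc : R ≤ K * D
    · rw [ih R hc]
      have h0 : R - K * D = 0 := by omega
      rw [h0]
      simp
    · have hterm : ∀ j ∈ Finset.range K, min D (R - j * D) = D := by
        intro j hj
        rw [Finset.mem_range] at hj
        apply min_eq_left
        have hstep : (j + 1) * D ≤ K * D := Nat.mul_le_mul_right D (by omega)
        have hexp : (j + 1) * D = j * D + D := by ring
        omega
      rw [Finset.sum_congr rfl hterm, Finset.sum_const, Finset.card_range, smul_eq_mul]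
      have hexp : (K + 1) * D = K * D + D := by ring
      have : min D (R - K * D) = R - K * D := min_eq_right (by omega)
      omega


lemma sum_support_eq {k : ℕ} (m : Fin k → ℕ) :
    ∑ i ∈ (Finsupp.equivFunOnFinite.symm m).support, (Finsupp.equivFunOnFinite.symm m) i
      = ∑ i, m i := by
  rw [Finset.sum_subset (Finset.subset_univ _)
    (fun x _ hx => Finsupp.notMem_support_iff.1 hx)]
  rfl

omit [DecidableEq F] in
lemma totalDegree_vmd_le (k : ℕ) :
    (vmd k F).totalDegree ≤ ∑ i : Fin k, (i : ℕ) := by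
  classical
  refine le_trans (MvPolynomial.totalDegree_finset_prod _ _) ?_
  have h1 : ∀ i : Fin k,
      (∏ j ∈ Finset.Ioi i, (MvPolynomial.X j - MvPolynomial.X i : MvPolynomial (Fin k) F)).totalDegree
        ≤ (Finset.Ioi i).card := by
    intro i
    refine le_trans (MvPolynomial.totalDegree_finset_prod _ _) ?_
    have h2 : ∀ j ∈ Finset.Ioi i,
        (MvPolynomial.X j - MvPolynomial.X i : MvPolynomial (Fin k) F).totalDegree ≤ 1 := by
      intro j _
      refine le_trans (MvPolynomial.totalDegree_sub _ _) ?_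
      simp [MvPolynomial.totalDegree_X]
    calc ∑ j ∈ Finset.Ioi i,
          (MvPolynomial.X j - MvPolynomial.X i : MvPolynomial (Fin k) F).totalDegree
        ≤ ∑ _j ∈ Finset.Ioi i, 1 := Finset.sum_le_sum h2
      _ = (Finset.Ioi i).card := by simp
  refine le_trans (Finset.sum_le_sum (fun i _ => h1 i)) ?_
  -- ∑ i, card (Ioi i) = ∑ i, (k - 1 - i) = ∑ i, i
  have h3 : ∀ i : Fin k, (Finset.Ioi i).card = k - 1 - (i : ℕ) := by
    intro i
    rw [Fin.card_Ioi]
  rw [Finset.sum_congr rfl (fun i _ => h3 i)]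
  rw [Fin.sum_univ_eq_sum_range (fun i => k - 1 - i), Fin.sum_univ_eq_sum_range (fun i => i)]
  exact le_of_eq (Finset.sum_range_reflect (fun i => i) k)

/-- Erdős–Heilbronn-type covering: if `p - 1 ≤ k (n - k)` then every element of `ZMod p`
is the sum of a `k`-element subset of any `n`-element set `B`, provided `n ≤ p`. -/
theorem exists_subset_sum_eq (p : ℕ) (hp : p.Prime) (B : Finset (ZMod p)) (k : ℕ)
    (hk0 : 0 < k) (hkn : k < B.card) (hnp : B.card ≤ p)
    (hcov : p - 1 ≤ k * (B.card - k)) (t : ZMod p) :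
    ∃ Z ⊆ B, Z.card = k ∧ ∑ z ∈ Z, z = t := by
  classical
  haveI : Fact p.Prime := ⟨hp⟩
  set n := B.card with hn
  set D := n - k with hD
  set R := p - 1 with hR
  have hD1 : 1 ≤ D := by omega
  -- the exponent vector
  set extra : Fin k → ℕ := fun i => min D (R - (k - 1 - (i : ℕ)) * D) with hextra
  set m : Fin k → ℕ := fun i => (i : ℕ) + extra i with hm
  have hextra_le : ∀ i, extra i ≤ D := fun i => min_le_left _ _
  have hextra_mono : Monotone extra := by
    intro i j hij
    apply min_le_min le_rfl
    apply Nat.sub_le_sub_left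
    apply Nat.mul_le_mul_right
    have : (i : ℕ) ≤ (j : ℕ) := hij
    omega
  have hmono : StrictMono m := by
    intro i j hij
    have h1 : (i : ℕ) < (j : ℕ) := hij
    have := hextra_mono (le_of_lt hij)
    simp only [hm]
    omega
  have hmlt : ∀ i, m i ≤ n - 1 := by
    intro i
    have h1 : (i : ℕ) ≤ k - 1 := by
      have := i.isLt
      omega
    have := hextra_le i
    simp only [hm]
    omega
  have hsum : ∑ i, m i = R + ∑ i : Fin k, (i : ℕ) := by
    have h1 : ∑ i, m i = ∑ i : Fin k, (i : ℕ) + ∑ i, extra i := by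
      rw [hm, Finset.sum_add_distrib]
    have h2 : ∑ i, extra i = R := by
      rw [hextra]
      rw [Fin.sum_univ_eq_sum_range (fun i => min D (R - (k - 1 - i) * D))]
      rw [← Finset.sum_range_reflect]
      have h3 : ∀ j ∈ Finset.range k, min D (R - (k - 1 - (k - 1 - j)) * D)
          = min D (R - j * D) := by
        intro j hj
        rw [Finset.mem_range] at hj
        have hjj : k - 1 - (k - 1 - j) = j := by omega
        rw [hjj]
      rw [Finset.sum_congr rfl h3]
      exact sum_min_D D k R hcov
    omega
  -- choose the grids
  have hms : ∀ i : Fin k, m i + 1 ≤ B.card := by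
    intro i
    have := hmlt i
    omega
  set S : Fin k → Finset (ZMod p) :=
    fun i => (Finset.exists_subset_card_eq (hms i)).choose with hS
  have hSB : ∀ i, S i ⊆ B := fun i => (Finset.exists_subset_card_eq (hms i)).choose_spec.1
  have hScard : ∀ i, (S i).card = m i + 1 :=
    fun i => (Finset.exists_subset_card_eq (hms i)).choose_spec.2
  have hSne : ∀ i, (S i).Nonempty := by
    intro i
    rw [← Finset.card_pos, hScard i]
    omega
  -- suppose no solution
  by_contra hno
  push_neg at hno
  -- the polynomials
  set A : MvPolynomial (Fin k) (ZMod p) := ∑ i, MvPolynomial.X i with hA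
  set f : MvPolynomial (Fin k) (ZMod p) :=
    (A - MvPolynomial.C t) ^ (p - 1) * vmd k (ZMod p) with hf
  have hAdeg : (A - MvPolynomial.C t).totalDegree ≤ 1 := by
    refine le_trans (MvPolynomial.totalDegree_sub _ _) ?_
    rw [max_le_iff]
    constructor
    · refine le_trans (MvPolynomial.totalDegree_finset_sum _ _) ?_
      apply Finset.sup_le
      intro i _
      rw [MvPolynomial.totalDegree_X]
    · rw [MvPolynomial.totalDegree_C]
      omega
  have hfdeg : f.totalDegree ≤ ∑ i, m i := by
    refine le_trans (MvPolynomial.totalDegree_mul _ _) ?_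
    have h1 : ((A - MvPolynomial.C t) ^ (p - 1)).totalDegree ≤ (p - 1) := by
      refine le_trans (MvPolynomial.totalDegree_pow _ _) ?_
      calc (p - 1) * (A - MvPolynomial.C t).totalDegree ≤ (p - 1) * 1 :=
            Nat.mul_le_mul_left _ hAdeg
        _ = p - 1 := by omega
    have h2 := totalDegree_vmd_le (F := ZMod p) k
    omega
  -- the eval equality on the grid
  have heval : ∀ z ∈ Fintype.piFinset S,
      MvPolynomial.eval z f = MvPolynomial.eval z (vmd k (ZMod p)) := by
    intro z hz
    rw [hf, map_mul]
    by_cases hinj : Function.Injective z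
    · have hZB : Finset.image z Finset.univ ⊆ B := by
        intro w hw
        rw [Finset.mem_image] at hw
        obtain ⟨i, -, rfl⟩ := hw
        exact hSB i (by
          rw [Fintype.mem_piFinset] at hz
          exact hz i)
      have hZcard : (Finset.image z Finset.univ).card = k := by
        rw [Finset.card_image_of_injective _ hinj, Finset.card_univ, Fintype.card_fin]
      have hZsum : ∑ w ∈ Finset.image z Finset.univ, w = ∑ i, z i :=
        Finset.sum_image (fun i _ j _ h => hinj h)
      have hne : ∑ i, z i ≠ t := by
        intro hcon
        exact hno (Finset.image z Finset.univ) hZB hZcard (by rw [hZsum, hcon])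
      have h1 : MvPolynomial.eval z (A - MvPolynomial.C t) = ∑ i, z i - t := by
        rw [map_sub, hA, map_sum]
        simp
      have h2 : MvPolynomial.eval z ((A - MvPolynomial.C t) ^ (p - 1)) = 1 := by
        rw [map_pow, h1]
        exact ZMod.pow_card_sub_one_eq_one (sub_ne_zero.2 hne)
      rw [h2, one_mul]
    · -- z not injective: the Vandermonde evaluates to zero
      have hzero : MvPolynomial.eval z (vmd k (ZMod p)) = 0 := by
        rw [Function.not_injective_iff] at hinj
        obtain ⟨i, j, hzij, hij⟩ := hinj
        rcases lt_or_gt_of_ne hij with h | h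
        · rw [vmd, map_prod]
          refine Finset.prod_eq_zero (Finset.mem_univ i) ?_
          rw [map_prod]
          refine Finset.prod_eq_zero (Finset.mem_Ioi.2 h) ?_
          rw [map_sub]
          simp [hzij]
        · rw [vmd, map_prod]
          refine Finset.prod_eq_zero (Finset.mem_univ j) ?_
          rw [map_prod]
          refine Finset.prod_eq_zero (Finset.mem_Ioi.2 h) ?_
          rw [map_sub]
          simp [hzij]
      rw [hzero, mul_zero]
  -- apply the grid-sum identity to f and to vmd
  have hcards : (fun i => (S i).card - 1) = m := by
    funext i
    rw [hScard i]
    omega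
  have hdegsum : ∑ i, ((S i).card - 1) = ∑ i, m i := by
    rw [hcards]
  have hid1 := grid_sum_eq_coeff S hSne f (by rw [hdegsum]; exact hfdeg)
  have hid2 := grid_sum_eq_coeff S hSne (vmd k (ZMod p)) (by
    rw [hdegsum]
    refine le_trans (totalDegree_vmd_le k) ?_
    omega)
  have hsums : ∑ z ∈ Fintype.piFinset S,
        (MvPolynomial.eval z f) * ∏ i, (∏ b ∈ (S i).erase (z i), (z i - b))⁻¹
      = ∑ z ∈ Fintype.piFinset S,
        (MvPolynomial.eval z (vmd k (ZMod p))) * ∏ i, (∏ b ∈ (S i).erase (z i), (z i - b))⁻¹ := by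
    refine Finset.sum_congr rfl fun z hz => ?_
    rw [heval z hz]
  rw [hid1, hid2, hcards] at hsums
  -- coefficient of vmd vanishes
  have hcoeffvmd : MvPolynomial.coeff (Finsupp.equivFunOnFinite.symm m) (vmd k (ZMod p)) = 0 := by
    apply MvPolynomial.coeff_eq_zero_of_totalDegree_lt
    have h1 := totalDegree_vmd_le (F := ZMod p) k
    rw [sum_support_eq m]
    have hp2 := hp.two_le
    omega
  -- coefficient of f equals coefficient of (ΣX)^(p-1) * vmd
  have hcoefff : MvPolynomial.coeff (Finsupp.equivFunOnFinite.symm m) f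
      = ((cInt k m : ℤ) : ZMod p) := by
    rw [hf]
    have hexpand : (A - MvPolynomial.C t) ^ (p - 1)
        = ∑ e ∈ Finset.range (p - 1 + 1),
            A ^ e * (- MvPolynomial.C t) ^ (p - 1 - e) * (Nat.choose (p - 1) e : MvPolynomial (Fin k) (ZMod p)) := by
      rw [sub_eq_add_neg, add_pow]
    rw [hexpand, Finset.sum_mul, MvPolynomial.coeff_sum]
    rw [Finset.sum_range_succ]
    have hlast : A ^ (p - 1) * (- MvPolynomial.C t) ^ (p - 1 - (p - 1)) *
          (Nat.choose (p - 1) (p - 1) : MvPolynomial (Fin k) (ZMod p)) * vmd k (ZMod p)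
        = A ^ (p - 1) * vmd k (ZMod p) := by
      rw [Nat.sub_self, pow_zero, Nat.choose_self, Nat.cast_one, mul_one, mul_one]
    rw [hlast]
    have hzeros : ∀ e ∈ Finset.range (p - 1),
        MvPolynomial.coeff (Finsupp.equivFunOnFinite.symm m)
          (A ^ e * (- MvPolynomial.C t) ^ (p - 1 - e) *
            (Nat.choose (p - 1) e : MvPolynomial (Fin k) (ZMod p)) * vmd k (ZMod p)) = 0 := by
      intro e he
      rw [Finset.mem_range] at he
      apply MvPolynomial.coeff_eq_zero_of_totalDegree_lt
      rw [sum_support_eq m, hsum]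
      have hd1 : (A ^ e).totalDegree ≤ e := by
        refine le_trans (MvPolynomial.totalDegree_pow _ _) ?_
        have hAd : A.totalDegree ≤ 1 := by
          refine le_trans (MvPolynomial.totalDegree_finset_sum _ _) ?_
          apply Finset.sup_le
          intro i _
          rw [MvPolynomial.totalDegree_X]
        calc e * A.totalDegree ≤ e * 1 := Nat.mul_le_mul_left _ hAd
          _ = e := by omega
      have hd2 : ((- MvPolynomial.C t : MvPolynomial (Fin k) (ZMod p)) ^ (p - 1 - e)).totalDegree = 0 := by
        rw [← map_neg, ← map_pow, MvPolynomial.totalDegree_C]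
      have hd3 : ((Nat.choose (p - 1) e : MvPolynomial (Fin k) (ZMod p))).totalDegree = 0 := by
        rw [← map_natCast (MvPolynomial.C : ZMod p →+* MvPolynomial (Fin k) (ZMod p)),
          MvPolynomial.totalDegree_C]
      have hd4 := totalDegree_vmd_le (F := ZMod p) k
      have hd5 := MvPolynomial.totalDegree_mul (A ^ e * (- MvPolynomial.C t) ^ (p - 1 - e) *
            (Nat.choose (p - 1) e : MvPolynomial (Fin k) (ZMod p))) (vmd k (ZMod p))
      have hd6 := MvPolynomial.totalDegree_mul (A ^ e * (- MvPolynomial.C t) ^ (p - 1 - e))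
            ((Nat.choose (p - 1) e : MvPolynomial (Fin k) (ZMod p)))
      have hd7 := MvPolynomial.totalDegree_mul (A ^ e) ((- MvPolynomial.C t) ^ (p - 1 - e))
      omega
    rw [Finset.sum_congr rfl hzeros, Finset.sum_const, smul_zero, zero_add]
    exact coeff_pow_mul_vmd m (by rw [hsum])
  rw [hcoefff, hcoeffvmd] at hsums
  -- contradiction with non-divisibility
  have hne0 : ((cInt k m : ℤ) : ZMod p) ≠ 0 := by
    rw [Ne, ZMod.intCast_zmod_eq_zero_iff_dvd]
    exact cInt_not_dvd hp m hmono (fun i => by have := hmlt i; omega) (by rw [hsum])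
  exact hne0 hsums


end CWC

open CWC in
/-- Lemma 5 of the paper: for `N > 3` and `k ≥ √(8N − 15)` there is a constant-weight
code `C` of `(k+1)`-element subsets of `[N]` with pairwise symmetric difference of
size at least `4`, such that whenever `n + m = N` and `k ≤ n − √(8N − 15)`, for every
`m`-element set `Y ⊆ [N]` and `y ∈ Y` there is a `k`-element set `C ⊆ [N] ∖ Y` with
`C ∪ {y} ∈ C`. -/
theorem exists_constant_weight_code (N k : ℕ) (hN : 3 < N)
    (hk : Real.sqrt (8 * N - 15) ≤ (k : ℝ)) :
    ∃ 𝒞 : Set (Finset (Fin N)),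
      (∀ S ∈ 𝒞, S.card = k + 1) ∧
      (∀ S ∈ 𝒞, ∀ T ∈ 𝒞, S ≠ T → 4 ≤ (symmDiff S T).card) ∧
      (∀ n m : ℕ, n + m = N → (k : ℝ) ≤ (n : ℝ) - Real.sqrt (8 * N - 15) →
        ∀ Y : Finset (Fin N), Y.card = m → ∀ y ∈ Y,
          ∃ C : Finset (Fin N), C.card = k ∧ Disjoint C Y ∧ insert y C ∈ 𝒞) := by
  classical
  -- Bertrand: a prime p with N ≤ p ≤ 2N - 3
  obtain ⟨p, hp, hlow, hhigh⟩ := Nat.exists_prime_lt_and_le_two_mul (N - 1) (by omega)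
  have hpN : N ≤ p := by omega
  have hup : p ≤ 2 * N - 3 := by
    rcases Nat.lt_or_ge p (2 * N - 2) with h | h
    · omega
    · exfalso
      have hpe : p = 2 * N - 2 := by omega
      have heven : Even p := ⟨N - 1, by omega⟩
      have := (Nat.Prime.even_iff hp).1 heven
      omega
  haveI : Fact p.Prime := ⟨hp⟩
  haveI : NeZero p := ⟨hp.pos.ne'⟩
  set g : Fin N → ZMod p := fun x => ((x : ℕ) : ZMod p) with hg
  have hginj : Function.Injective g := by
    intro a b hab
    have ha : ((a : ℕ) : ZMod p).val = (a : ℕ) :=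
      ZMod.val_cast_of_lt (lt_of_lt_of_le a.isLt hpN)
    have hb : ((b : ℕ) : ZMod p).val = (b : ℕ) :=
      ZMod.val_cast_of_lt (lt_of_lt_of_le b.isLt hpN)
    have : (a : ℕ) = (b : ℕ) := by
      rw [← ha, ← hb, show ((a : ℕ) : ZMod p) = ((b : ℕ) : ZMod p) from hab]
    exact Fin.ext this
  -- square root facts
  have h15 : (15 : ℝ) ≤ 8 * N := by
    have : (4 : ℝ) ≤ (N : ℝ) := by exact_mod_cast hN
    linarith
  have hsqlow : (4 : ℝ) < Real.sqrt (8 * N - 15) := by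
    have h17 : (17 : ℝ) ≤ 8 * (N : ℝ) - 15 := by
      have : (4 : ℝ) ≤ (N : ℝ) := by exact_mod_cast hN
      linarith
    have h1 : (4 : ℝ) < Real.sqrt 17 := by
      rw [show (4 : ℝ) = Real.sqrt 16 by
        rw [show (16 : ℝ) = 4 ^ 2 by norm_num, Real.sqrt_sq (by norm_num)]]
      exact Real.sqrt_lt_sqrt (by norm_num) (by norm_num)
    exact lt_of_lt_of_le h1 (Real.sqrt_le_sqrt h17)
  have hk5 : 5 ≤ k := by
    have : (4 : ℝ) < (k : ℝ) := lt_of_lt_of_le hsqlow hk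
    have : 4 < k := by exact_mod_cast this
    omega
  refine ⟨{S : Finset (Fin N) | S.card = k + 1 ∧ ∑ x ∈ S, g x = 0}, ?_, ?_, ?_⟩
  · intro S hS; exact hS.1
  · -- minimum distance 4
    intro S hS T hT hne
    have hcard : (symmDiff S T).card = (S \ T).card + (T \ S).card := by
      rw [symmDiff_def, Finset.sup_eq_union,
        Finset.card_union_of_disjoint disjoint_sdiff_sdiff]
    have hSTeq : (S \ T).card = (T \ S).card := by
      have h1 : S.card = T.card := by rw [hS.1, hT.1]
      have h2 := Finset.card_inter_add_card_sdiff S T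
      have h3 := Finset.card_inter_add_card_sdiff T S
      rw [Finset.inter_comm] at h3
      omega
    have hST1 : 1 ≤ (S \ T).card := by
      rcases Nat.eq_zero_or_pos (S \ T).card with h | h
      · exfalso
        have hsub : S ⊆ T := by
          rw [← Finset.sdiff_eq_empty_iff_subset]
          exact Finset.card_eq_zero.1 h
        have : S = T := Finset.eq_of_subset_of_card_le hsub (by rw [hS.1, hT.1])
        exact hne this
      · omega
    by_contra hlt
    push_neg at hlt
    have hST : (S \ T).card = 1 := by omega
    obtain ⟨a, ha⟩ := Finset.card_eq_one.1 hST
    obtain ⟨b, hb⟩ := Finset.card_eq_one.1 (hSTeq ▸ hST)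
    -- compare sums over S ∪ T
    have hsum1 : ∑ x ∈ S ∪ T, g x = ∑ x ∈ S, g x + ∑ x ∈ T \ S, g x := by
      rw [← Finset.sum_union Finset.disjoint_sdiff]
      congr 1
      rw [Finset.union_sdiff_self_eq_union]
    have hsum2 : ∑ x ∈ S ∪ T, g x = ∑ x ∈ T, g x + ∑ x ∈ S \ T, g x := by
      rw [← Finset.sum_union Finset.disjoint_sdiff]
      congr 1
      rw [Finset.union_sdiff_self_eq_union, Finset.union_comm]
    have hgab : g b = g a := by
      have := hsum1.symm.trans hsum2
      rw [hS.2, hT.2, zero_add, zero_add, ha, hb, Finset.sum_singleton,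
        Finset.sum_singleton] at this
      exact this
    have hab : a = b := hginj hgab.symm
    have haS : a ∈ S \ T := by rw [ha]; exact Finset.mem_singleton_self a
    have hbT : b ∈ T \ S := by rw [hb]; exact Finset.mem_singleton_self b
    rw [Finset.mem_sdiff] at haS hbT
    rw [hab] at haS
    exact haS.2 hbT.1
  · -- covering
    intro n m hnm hkn Y hY y hyY
    have hsqN : ((8 * N - 15 : ℕ) : ℝ) = 8 * (N : ℝ) - 15 := by
      push_cast [Nat.cast_sub (by omega : 15 ≤ 8 * N)]
      ring
    -- natural-number consequences
    have hkon : (k : ℝ) + Real.sqrt (8 * N - 15) ≤ (n : ℝ) := by linarith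
    have hknat : k + 4 < n := by
      have : (k : ℝ) + 4 < (n : ℝ) := by linarith
      exact_mod_cast this
    have hkltn : k < n := by omega
    have hnN : n ≤ N := by omega
    have hprod : 8 * N - 15 ≤ k * (n - k) := by
      have h1 : Real.sqrt (8 * N - 15) * Real.sqrt (8 * N - 15) = 8 * (N : ℝ) - 15 :=
        Real.mul_self_sqrt (by linarith)
      have h2 : Real.sqrt (8 * N - 15) ≤ ((n - k : ℕ) : ℝ) := by
        rw [Nat.cast_sub (le_of_lt hkltn)]
        linarith
      have h3 : 8 * (N : ℝ) - 15 ≤ (k : ℝ) * ((n - k : ℕ) : ℝ) := by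
        calc 8 * (N : ℝ) - 15 = Real.sqrt (8 * N - 15) * Real.sqrt (8 * N - 15) := h1.symm
          _ ≤ (k : ℝ) * ((n - k : ℕ) : ℝ) := by
              apply mul_le_mul hk h2 (Real.sqrt_nonneg _) (by positivity)
        
      have h4 : ((8 * N - 15 : ℕ) : ℝ) ≤ ((k * (n - k) : ℕ) : ℝ) := by
        rw [hsqN]
        push_cast
        exact h3
      exact_mod_cast h4
    have hpk : p - 1 ≤ k * (n - k) := by omega
    -- the ambient set
    have hA : (Finset.univ \ Y).card = n := by
      rw [Finset.card_sdiff_of_subset (Finset.subset_univ _), Finset.card_univ, Fintype.card_fin, hY]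
      omega
    set B : Finset (ZMod p) := (Finset.univ \ Y).image g with hB
    have hBcard : B.card = n := by
      rw [hB, Finset.card_image_of_injective _ hginj, hA]
    obtain ⟨Z, hZB, hZcard, hZsum⟩ := exists_subset_sum_eq p hp B k
      (by omega) (by omega) (by omega) (by rw [hBcard]; exact hpk) (-(g y))
    set C : Finset (Fin N) := (Finset.univ \ Y).filter (fun x => g x ∈ Z) with hC
    have himg : C.image g = Z := by
      apply Finset.Subset.antisymm
      · intro w hw
        rw [Finset.mem_image] at hw
        obtain ⟨x, hx, rfl⟩ := hw
        exact (Finset.mem_filter.1 hx).2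
      · intro w hw
        have hwB : w ∈ B := hZB hw
        rw [hB, Finset.mem_image] at hwB
        obtain ⟨x, hx, rfl⟩ := hwB
        rw [Finset.mem_image]
        exact ⟨x, Finset.mem_filter.2 ⟨hx, hw⟩, rfl⟩
    have hCcard : C.card = k := by
      rw [← hZcard, ← himg, Finset.card_image_of_injective _ hginj]
    have hdisj : Disjoint C Y := by
      rw [Finset.disjoint_left]
      intro x hx
      have := Finset.mem_sdiff.1 ((Finset.filter_subset _ _) hx)
      exact this.2
    have hyC : y ∉ C := fun h => (Finset.disjoint_left.1 hdisj h) hyY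
    refine ⟨C, hCcard, hdisj, ?_, ?_⟩
    · rw [Finset.card_insert_of_notMem hyC, hCcard]
    · rw [Finset.sum_insert hyC]
      have hCsum : ∑ x ∈ C, g x = ∑ w ∈ Z, w := by
        rw [← himg, Finset.sum_image (fun x _ x' _ h => hginj h)]
      rw [hCsum, hZsum]
      exact add_neg_cancel (g y)
end

section
/- Let n, l ∈ ℕ with n ≥ 5 and 1 ≤ l ≤ n − 3, and let X and Y be disjoint sets with |X| = n. Let g be a function from the l-element subsets of X to X ∪ Y such that: (i) for every l-element set A ⊆ X, g(A) ∉ A; and (ii) for all l-element sets A, B ⊆ X with |A △ B| = 2 and g(A) ≠ g(B), at least one of {g(A)} = B ∖ A and {g(B)} = A ∖ B holds. Then there exists y ∈ X ∪ Y such that g(A) = y for every l-element subset A of X ∖ {y}. -/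
open Finset

lemma star_core_aux {α : Type*} [DecidableEq α] (W : Finset α) (hW : 4 ≤ W.card) (v : α → α)
    (r : ∀ x ∈ W, ∀ x' ∈ W, x ≠ x' → v x = v x' ∨ v x = x' ∨ v x' = x)
    (x1 x2 : α) (hx1 : x1 ∈ W) (hx2 : x2 ∈ W) (hne : v x1 ≠ v x2) (h1 : v x1 = x2) :
    ∃ p, (p ∈ W ∨ ∃ w ∈ W, v w = p) ∧ ∀ x ∈ W, x ≠ p → v x = p := by
  have h12 : x1 ≠ x2 := by rintro rfl; exact hne rfl
  by_cases hb : ∃ x3 ∈ W, x3 ≠ x1 ∧ x3 ≠ x2 ∧ v x3 = x1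
  · obtain ⟨x3, hx3, h31, h32, hv3⟩ := hb
    have h4 : ∀ x ∈ W, x ≠ x1 → x ≠ x2 → x ≠ x3 → v x = x1 := by
      intro x hx ha hb' hc
      have A := r x1 hx1 x hx (Ne.symm ha)
      have B := r x3 hx3 x hx (Ne.symm hc)
      rw [h1] at A
      rw [hv3] at B
      rcases A with A | A | A
      · rcases B with B | B | B
        · exact absurd (B.trans A.symm) h12
        · exact absurd B.symm ha
        · exact absurd (A.trans B).symm h32
      · exact absurd A.symm hb'
      · exact A
    -- get x4 outside {x1,x2,x3}
    have hcard3 : ({x1, x2, x3} : Finset α).card ≤ 3 := by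
      apply le_trans (card_insert_le _ _)
      have : ({x2, x3} : Finset α).card ≤ 2 := by
        apply le_trans (card_insert_le _ _); simp
      omega
    have hx4 : (W \ {x1, x2, x3}).Nonempty := by
      rw [← card_pos]
      have := le_card_sdiff ({x1, x2, x3} : Finset α) W
      omega
    obtain ⟨x4, hx4⟩ := hx4
    rw [mem_sdiff] at hx4
    obtain ⟨hx4W, hx4n⟩ := hx4
    simp only [mem_insert, mem_singleton, not_or] at hx4n
    obtain ⟨h41, h42, h43⟩ := hx4n
    have hv4 : v x4 = x1 := h4 x4 hx4W h41 h42 h43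
    have hv2 : v x2 = x1 := by
      rcases r x2 hx2 x3 hx3 (Ne.symm h32) with h | h | h
      · rw [h, hv3]
      · -- v x2 = x3 : contradiction via x4
        exfalso
        rcases r x2 hx2 x4 hx4W (Ne.symm h42) with h' | h' | h'
        · rw [h, hv4] at h'; exact h31 h' 
        · rw [h] at h'; exact h43 h'.symm
        · rw [hv4] at h'; exact h12 h'
      · rw [hv3] at h; exact absurd h h12
    refine ⟨x1, Or.inl hx1, ?_⟩
    intro x hx hxp
    rcases eq_or_ne x x2 with rfl | hb2
    · exact hv2
    rcases eq_or_ne x x3 with rfl | hb3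
    · exact hv3
    exact h4 x hx hxp hb2 hb3
  · push_neg at hb
    refine ⟨x2, Or.inl hx2, ?_⟩
    intro x hx hxp
    rcases eq_or_ne x x1 with rfl | hb1
    · exact h1
    rcases r x1 hx1 x hx (Ne.symm hb1) with h | h | h
    · rw [← h, h1]
    · rw [h1] at h; exact absurd h.symm hxp
    · exact absurd h (hb x hx hb1 hxp)

lemma star_core {α : Type*} [DecidableEq α] (W : Finset α) (hW : 4 ≤ W.card) (v : α → α)
    (r : ∀ x ∈ W, ∀ x' ∈ W, x ≠ x' → v x = v x' ∨ v x = x' ∨ v x' = x) :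
    ∃ p, (p ∈ W ∨ ∃ w ∈ W, v w = p) ∧ ∀ x ∈ W, x ≠ p → v x = p := by
  by_cases hc : ∀ x ∈ W, ∀ x' ∈ W, v x = v x'
  · have hne : W.Nonempty := card_pos.mp (by omega)
    obtain ⟨w, hw⟩ := hne
    exact ⟨v w, Or.inr ⟨w, hw, rfl⟩, fun x hx _ => hc x hx w hw⟩
  · push_neg at hc
    obtain ⟨x1, hx1, x2, hx2, hne⟩ := hc
    have h12 : x1 ≠ x2 := by rintro rfl; exact hne rfl
    rcases r x1 hx1 x2 hx2 h12 with h | h | h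
    · exact absurd h hne
    · exact star_core_aux W hW v r x1 x2 hx1 hx2 hne h
    · have r' : ∀ x ∈ W, ∀ x' ∈ W, x ≠ x' → v x = v x' ∨ v x = x' ∨ v x' = x := r
      exact star_core_aux W hW v r x2 x1 hx2 hx1 (Ne.symm hne) h

set_option maxHeartbeats 1600000 in
lemma aux_const {α : Type*} [DecidableEq α] (n : ℕ) (hn : 5 ≤ n)
    (X Y : Finset α) (hXY : Disjoint X Y) (hX : X.card = n) :
    ∀ l : ℕ, l ≤ n - 3 → ∀ g : Finset α → α,
    (∀ A : Finset α, A ⊆ X → A.card = l → g A ∈ X ∪ Y) →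
    (∀ A : Finset α, A ⊆ X → A.card = l → g A ∉ A) →
    (∀ A B : Finset α, A ⊆ X → B ⊆ X → A.card = l → B.card = l →
      (symmDiff A B).card = 2 → g A ≠ g B →
      B \ A = {g A} ∨ A \ B = {g B}) →
    ∃ y ∈ X ∪ Y, ∀ A : Finset α, A ⊆ X \ {y} → A.card = l → g A = y := by
  intro l
  induction l with
  | zero =>
    intro _ g hmem hnotin hswap
    refine ⟨g ∅, hmem ∅ (empty_subset X) rfl, ?_⟩
    intro A hA hc
    rw [Finset.card_eq_zero] at hc
    rw [hc]
  | succ l ih =>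
    intro hl g hmem hnotin hswap
    have hl' : l ≤ n - 3 := by omega
    -- the pairwise swap rule on stars
    have rule : ∀ S : Finset α, S ⊆ X → S.card = l →
        ∀ x ∈ X, ∀ x' ∈ X, x ∉ S → x' ∉ S → x ≠ x' →
        g (insert x S) = g (insert x' S) ∨ g (insert x S) = x' ∨ g (insert x' S) = x := by
      intro S hSX hSc x hxX x' hx'X hxS hx'S hxx'
      by_cases heq : g (insert x S) = g (insert x' S)
      · exact Or.inl heq
      have hA : insert x S ⊆ X := insert_subset hxX hSX
      have hB : insert x' S ⊆ X := insert_subset hx'X hSX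
      have hAc : (insert x S).card = l + 1 := by rw [card_insert_of_notMem hxS, hSc]
      have hBc : (insert x' S).card = l + 1 := by rw [card_insert_of_notMem hx'S, hSc]
      have hsd : symmDiff (insert x S) (insert x' S) = {x, x'} := by
        ext a
        simp only [Finset.mem_symmDiff, mem_insert, mem_singleton]
        constructor
        · rintro (⟨h1, h2⟩ | ⟨h1, h2⟩) <;> tauto
        · rintro (rfl | rfl) <;> tauto
      have hsd2 : (symmDiff (insert x S) (insert x' S)).card = 2 := by
        rw [hsd, card_insert_of_notMem (by simpa using hxx'), card_singleton]
      have hBA : insert x' S \ insert x S = {x'} := by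
        ext a
        simp only [mem_sdiff, mem_insert, mem_singleton, not_or]
        constructor
        · rintro ⟨rfl | h, h2, h3⟩ <;> tauto
        · rintro rfl; tauto
      have hAB : insert x S \ insert x' S = {x} := by
        ext a
        simp only [mem_sdiff, mem_insert, mem_singleton, not_or]
        constructor
        · rintro ⟨rfl | h, h2, h3⟩ <;> tauto
        · rintro rfl; tauto
      rcases hswap _ _ hA hB hAc hBc hsd2 heq with h | h
      · rw [hBA] at h
        exact Or.inr (Or.inl (Finset.singleton_injective h).symm)
      · rw [hAB] at h
        exact Or.inr (Or.inr (Finset.singleton_injective h).symm)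
    -- star lemma with choice-friendly form
    have star : ∀ S : Finset α, ∃ p : α, S ⊆ X → S.card = l →
        p ∈ X ∪ Y ∧ p ∉ S ∧ ∀ x ∈ X, x ∉ S → x ≠ p → g (insert x S) = p := by
      intro S
      by_cases hS : S ⊆ X ∧ S.card = l
      swap
      · exact ⟨g S, fun h1 h2 => absurd ⟨h1, h2⟩ hS⟩
      obtain ⟨hSX, hSc⟩ := hS
      have hW4 : 4 ≤ (X \ S).card := by
        rw [card_sdiff_of_subset hSX, hX, hSc]; omega
      have r : ∀ x ∈ X \ S, ∀ x' ∈ X \ S, x ≠ x' →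
          g (insert x S) = g (insert x' S) ∨ g (insert x S) = x' ∨ g (insert x' S) = x := by
        intro x hx x' hx' hxx'
        rw [mem_sdiff] at hx hx'
        exact rule S hSX hSc x hx.1 x' hx'.1 hx.2 hx'.2 hxx'
      obtain ⟨p, hpm, hp⟩ := star_core (X \ S) hW4 (fun x => g (insert x S)) r
      have hpXY : p ∈ X ∪ Y := by
        rcases hpm with h | ⟨w, hw, hvw⟩
        · exact mem_union_left Y (mem_sdiff.mp h).1
        · rw [mem_sdiff] at hw
          rw [← hvw]
          exact hmem _ (insert_subset hw.1 hSX) (by rw [card_insert_of_notMem hw.2, hSc])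
      have hpS : p ∉ S := by
        obtain ⟨x, hxW, hxp⟩ := Finset.exists_mem_ne
          (s := X \ S) (by omega) p
        have hv := hp x hxW hxp
        rw [mem_sdiff] at hxW
        have := hnotin (insert x S) (insert_subset hxW.1 hSX)
          (by rw [card_insert_of_notMem hxW.2, hSc])
        rw [hv] at this
        intro hc
        exact this (mem_insert_of_mem hc)
      refine ⟨p, fun _ _ => ⟨hpXY, hpS, ?_⟩⟩
      intro x hxX hxS hxp
      exact hp x (mem_sdiff.mpr ⟨hxX, hxS⟩) hxp
    choose p hp using star
    have pmem : ∀ S : Finset α, S ⊆ X → S.card = l → p S ∈ X ∪ Y :=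
      fun S h1 h2 => (hp S h1 h2).1
    have pnot : ∀ S : Finset α, S ⊆ X → S.card = l → p S ∉ S :=
      fun S h1 h2 => (hp S h1 h2).2.1
    have pstar : ∀ S : Finset α, S ⊆ X → S.card = l →
        ∀ x ∈ X, x ∉ S → x ≠ p S → g (insert x S) = p S :=
      fun S h1 h2 => (hp S h1 h2).2.2
    have pswap : ∀ S T : Finset α, S ⊆ X → T ⊆ X → S.card = l → T.card = l →
        (symmDiff S T).card = 2 → p S ≠ p T → T \ S = {p S} ∨ S \ T = {p T} := by
      intro S T hS hT hSc hTc hcard hne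
      have hdisj : Disjoint (S \ T) (T \ S) := disjoint_sdiff_sdiff
      have hsd : symmDiff S T = (S \ T) ∪ (T \ S) := by
        ext a
        simp only [Finset.mem_symmDiff, mem_sdiff, mem_union]
      have hcards : (S \ T).card + (T \ S).card = 2 := by
        rw [hsd, card_union_of_disjoint hdisj] at hcard
        exact hcard
      have hi1 : (S \ T).card + (S ∩ T).card = S.card := by
        rw [card_sdiff_add_card_inter]
      have hi2 : (T \ S).card + (T ∩ S).card = T.card := by
        rw [card_sdiff_add_card_inter]
      have hint : (S ∩ T).card = (T ∩ S).card := by rw [inter_comm]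
      have hST1 : (S \ T).card = 1 := by omega
      have hTS1 : (T \ S).card = 1 := by omega
      obtain ⟨s, hs⟩ := card_eq_one.mp hST1
      obtain ⟨t, ht⟩ := card_eq_one.mp hTS1
      by_cases hps : p S = t
      · left; rw [ht, hps]
      by_cases hpt : p T = s
      · right; rw [hs, hpt]
      exfalso
      have hmemS : ∀ a, a ∈ S ∧ a ∉ T ↔ a = s := by
        intro a; rw [← mem_sdiff, hs, mem_singleton]
      have hmemT : ∀ a, a ∈ T ∧ a ∉ S ↔ a = t := by
        intro a; rw [← mem_sdiff, ht, mem_singleton]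
      have hsS : s ∈ S ∧ s ∉ T := (hmemS s).mpr rfl
      have htT : t ∈ T ∧ t ∉ S := (hmemT t).mpr rfl
      have hins : insert t S = insert s T := by
        ext a
        simp only [mem_insert]
        have h1 := hmemS a
        have h2 := hmemT a
        by_cases haS : a ∈ S <;> by_cases haT : a ∈ T <;> tauto
      have e1 : g (insert t S) = p S :=
        pstar S hS hSc t (hT htT.1) htT.2 (fun h => hps h.symm)
      have e2 : g (insert s T) = p T :=
        pstar T hT hTc s (hS hsS.1) hsS.2 (fun h => hpt h.symm)
      rw [hins, e2] at e1
      exact hne e1.symm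
    obtain ⟨y, hy, hconst⟩ := ih hl' p pmem pnot pswap
    refine ⟨y, hy, ?_⟩
    intro A hA hAc
    have hAne : A.Nonempty := card_pos.mp (by omega)
    obtain ⟨x, hx⟩ := hAne
    have hSc : (A.erase x).card = l := by rw [card_erase_of_mem hx, hAc]; omega
    have hS : A.erase x ⊆ X \ {y} := (erase_subset x A).trans hA
    have hSX : A.erase x ⊆ X := hS.trans (sdiff_subset)
    have hpS : p (A.erase x) = y := hconst (A.erase x) hS hSc
    have hxmem := mem_sdiff.mp (hA hx)
    have hxy : x ≠ y := by simpa using hxmem.2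
    have := pstar (A.erase x) hSX hSc x hxmem.1 (notMem_erase x A)
      (by rw [hpS]; exact hxy)
    rw [insert_erase hx] at this
    rw [this, hpS]

/-- Lemma 9 of the paper: let `n ≥ 5`, `1 ≤ l ≤ n − 3`, let `X` and `Y` be disjoint
sets with `|X| = n`, and let `g` assign to each `l`-element subset `A ⊆ X` an element
of `X ∪ Y` with `g(A) ∉ A`, such that for all `l`-element `A, B ⊆ X` with
`|A △ B| = 2` and `g(A) ≠ g(B)`, at least one of `{g(A)} = B ∖ A` and
`{g(B)} = A ∖ B` holds. Then there is `y ∈ X ∪ Y` such that `g(A) = y` for every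
`l`-element subset `A` of `X ∖ {y}`. -/
theorem constant_on_avoiding_sets {α : Type*} [DecidableEq α]
    (n l : ℕ) (hn : 5 ≤ n) (hl1 : 1 ≤ l) (hl2 : l ≤ n - 3)
    (X Y : Finset α) (hXY : Disjoint X Y) (hX : X.card = n)
    (g : Finset α → α)
    (hmem : ∀ A : Finset α, A ⊆ X → A.card = l → g A ∈ X ∪ Y)
    (hnotin : ∀ A : Finset α, A ⊆ X → A.card = l → g A ∉ A)
    (hswap : ∀ A B : Finset α, A ⊆ X → B ⊆ X → A.card = l → B.card = l →
      (symmDiff A B).card = 2 → g A ≠ g B →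
      B \ A = {g A} ∨ A \ B = {g B}) :
    ∃ y ∈ X ∪ Y, ∀ A : Finset α, A ⊆ X \ {y} → A.card = l → g A = y :=
  aux_const n hn X Y hXY hX l hl2 g hmem hnotin hswap
end

section
/- Let m ≥ 2, n ≥ 1 and 0 ≤ k ≤ n − 1 be integers, and let φ: Q_n → Q_{n+m} be an injective order-preserving map (A ⊆ B implies φ(A) ⊆ φ(B)) such that no set in the image of φ has cardinality belonging to {k} ∪ {k+3, k+4, …, k+m+1}. Then for every A ⊆ [n]: |φ(A)| = |A| if |A| ≤ k − 1; |φ(A)| = |A| + 1 if k ≤ |A| ≤ k + 1; and |φ(A)| = |A| + m if |A| ≥ k + 2. -/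
/-- If `φ : Q_n → Q_{n+m}` is an injective order-preserving map (with `m ≥ 2`,
`1 ≤ n`, `0 ≤ k ≤ n − 1`) such that no set in its image has cardinality in
`{k} ∪ {k+3, k+4, …, k+m+1}`, then `|φ(A)| = |A|` if `|A| < k` (i.e. `|A| ≤ k − 1`),
`|φ(A)| = |A| + 1` if `k ≤ |A| ≤ k + 1`, and `|φ(A)| = |A| + m` if `|A| ≥ k + 2`. -/
theorem image_cardinalities_of_weak_embedding (m n k : ℕ)
    (hm : 2 ≤ m) (hn : 1 ≤ n) (hk : k ≤ n - 1)
    (φ : Finset (Fin n) → Finset (Fin (n + m)))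
    (hinj : Function.Injective φ)
    (hmono : ∀ A B : Finset (Fin n), A ⊆ B → φ A ⊆ φ B)
    (havoid : ∀ A : Finset (Fin n), (φ A).card ≠ k ∧
      ∀ i : ℕ, k + 3 ≤ i → i ≤ k + m + 1 → (φ A).card ≠ i) :
    ∀ A : Finset (Fin n),
      (A.card < k → (φ A).card = A.card) ∧
      (k ≤ A.card → A.card ≤ k + 1 → (φ A).card = A.card + 1) ∧
      (k + 2 ≤ A.card → (φ A).card = A.card + m) := by
  have hkn : k + 1 ≤ n := by omega
  -- avoidance, restated
  have havoid' : ∀ A : Finset (Fin n), (φ A).card ≠ k ∧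
      ((φ A).card < k + 3 ∨ k + m + 1 < (φ A).card) := by
    intro A
    refine ⟨(havoid A).1, ?_⟩
    by_contra hc
    push_neg at hc
    exact (havoid A).2 _ hc.1 hc.2 rfl
  -- strict monotonicity of cardinalities
  have hstrict : ∀ A B : Finset (Fin n), A ⊂ B → (φ A).card < (φ B).card := by
    intro A B h
    exact Finset.card_lt_card (Finset.ssubset_iff_subset_ne.mpr
      ⟨hmono _ _ h.subset, fun he => h.ne (hinj he)⟩)
  -- chain lemma
  have chain : ∀ d : ℕ, ∀ A B : Finset (Fin n), A ⊆ B → A.card + d ≤ B.card →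
      (φ A).card + d ≤ (φ B).card := by
    intro d
    induction d with
    | zero => intro A B h _; simpa using Finset.card_le_card (hmono _ _ h)
    | succ d ih =>
      intro A B hAB hcard
      obtain ⟨A', hAA', hA'B, hA'card⟩ :=
        Finset.exists_subsuperset_card_eq hAB (Nat.le_add_right A.card d) (by omega)
      have h1 := ih A A' hAA' (by omega)
      have h2 : A' ⊂ B := Finset.ssubset_iff_subset_ne.mpr
        ⟨hA'B, fun he => by subst he; omega⟩
      have h3 := hstrict A' B h2
      omega
  have cardn : ∀ A : Finset (Fin n), A.card ≤ n := by
    intro A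
    simpa using Finset.card_le_univ A
  -- lower bound
  have lower : ∀ A : Finset (Fin n), A.card ≤ (φ A).card := by
    intro A
    have := chain A.card ∅ A (Finset.empty_subset A) (by simp)
    omega
  -- upper bound
  have upper : ∀ A : Finset (Fin n), (φ A).card ≤ A.card + m := by
    intro A
    have h1 := chain (n - A.card) A Finset.univ (Finset.subset_univ A)
      (by have := cardn A; simp [Finset.card_univ]; omega)
    have h2 : (φ Finset.univ).card ≤ n + m := by
      simpa using Finset.card_le_univ (φ Finset.univ)
    have := cardn A
    omega
  -- sets of card k or k+1 map to card k+1 or k+2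
  have mid : ∀ A : Finset (Fin n), A.card = k ∨ A.card = k + 1 →
      (φ A).card = k + 1 ∨ (φ A).card = k + 2 := by
    intro A hA
    have h1 := lower A
    have h2 := upper A
    have h3 := havoid' A
    omega
  -- existence of supersets of given card
  have exsup : ∀ (A : Finset (Fin n)) (c : ℕ), A.card ≤ c → c ≤ n →
      ∃ B, A ⊆ B ∧ B.card = c := by
    intro A c h1 h2
    obtain ⟨B, hAB, _, hB⟩ := Finset.exists_subsuperset_card_eq (Finset.subset_univ A) h1
      (by simpa [Finset.card_univ] using h2)
    exact ⟨B, hAB, hB⟩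
  -- card k ⇒ image card k+1
  have hφk : ∀ B : Finset (Fin n), B.card = k → (φ B).card = k + 1 := by
    intro B hB
    obtain ⟨C, hBC, hC⟩ := exsup B (k + 1) (by omega) hkn
    have h1 := mid B (Or.inl hB)
    have h2 := mid C (Or.inr hC)
    have h3 := hstrict B C (Finset.ssubset_iff_subset_ne.mpr
      ⟨hBC, fun he => by subst he; omega⟩)
    omega
  -- card k+1 ⇒ image card k+2
  have hφk1 : ∀ C : Finset (Fin n), C.card = k + 1 → (φ C).card = k + 2 := by
    intro C hC
    obtain ⟨B, hBC, hB⟩ := Finset.exists_subset_card_eq (s := C) (n := k) (by omega)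
    have h1 := mid C (Or.inr hC)
    have h2 := hφk B hB
    have h3 := hstrict B C (Finset.ssubset_iff_subset_ne.mpr
      ⟨hBC, fun he => by subst he; omega⟩)
    omega
  -- card k+2 ⇒ image card k+2+m
  have hφk2 : ∀ D : Finset (Fin n), D.card = k + 2 → (φ D).card = k + 2 + m := by
    intro D hD
    obtain ⟨C, hCD, hC⟩ := Finset.exists_subset_card_eq (s := D) (n := k + 1) (by omega)
    have h1 := hφk1 C hC
    have h2 := hstrict C D (Finset.ssubset_iff_subset_ne.mpr
      ⟨hCD, fun he => by subst he; omega⟩)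
    have h3 := havoid' D
    have h4 := upper D
    omega
  intro A
  refine ⟨?_, ?_, ?_⟩
  · -- |A| < k
    intro hA
    obtain ⟨W, hAW, hW⟩ := exsup A (k - 1) (by omega) (by omega)
    obtain ⟨B, hWB, hB⟩ := exsup W k (by omega) (by omega)
    have h1 := hφk B hB
    have h2 := hstrict W B (Finset.ssubset_iff_subset_ne.mpr
      ⟨hWB, fun he => by subst he; omega⟩)
    have h3 := (havoid' W).1
    have h4 := chain (k - 1 - A.card) A W hAW (by omega)
    have h5 := lower A
    omega
  · -- k ≤ |A| ≤ k+1
    intro h1 h2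
    rcases Nat.eq_or_lt_of_le h1 with h | h
    · have := hφk A h.symm; omega
    · have := hφk1 A (by omega); omega
  · -- |A| ≥ k+2
    intro hA
    obtain ⟨D, hDA, hD⟩ := Finset.exists_subset_card_eq (s := A) (n := k + 2) (by omega)
    have h1 := hφk2 D hD
    have h2 := chain (A.card - (k + 2)) D A hDA (by omega)
    have h3 := upper A
    omega
end
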